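/- arXiv:math/0208254 — 5 statements merged into one kernel-verified Lean document; each statement's English description precedes it below -/
import Mathlib

section
/- Let V₁ and V₂ be finite-dimensional complex inner product spaces and let e : V₁ → V₂ be a linear map. On the product space V₁ × V₂ (with the product inner product) define the linear operator E by E(x, y) = (0, e x), and for any linear map f : V₂ → V₁ define F_f by F_f(x, y) = (f y, 0) and H_f = E ∘ F_f − F_f ∘ E. Then there exists a unique linear map f : V₂ → V₁ such that H_f ∘ E − E ∘ H_f = 2 • E, H_f ∘ F_f − F_f ∘ H_f = −2 • F_f, and H_f is self-adjoint. In other words, every linear map e between finite-dimensional complex inner product spaces embeds, in a unique way, into an sl₂-triple ⟨E, H, F⟩ of operators on V₁ × V₂ of the above block form whose characteristic H is Hermitian. -/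
open scoped InnerProductSpace

variable {V₁ V₂ : Type*}
  [NormedAddCommGroup V₁] [InnerProductSpace ℂ V₁]
  [NormedAddCommGroup V₂] [InnerProductSpace ℂ V₂]

/-- The operator `E(x, y) = (0, e x)` on `V₁ × V₂` associated to `e : V₁ → V₂`. -/
def Eop (e : V₁ →ₗ[ℂ] V₂) : (V₁ × V₂) →ₗ[ℂ] V₁ × V₂ :=
  LinearMap.prod 0 (e ∘ₗ LinearMap.fst ℂ V₁ V₂)

/-- The operator `F(x, y) = (f y, 0)` on `V₁ × V₂` associated to `f : V₂ → V₁`. -/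
def Fop (f : V₂ →ₗ[ℂ] V₁) : (V₁ × V₂) →ₗ[ℂ] V₁ × V₂ :=
  LinearMap.prod (f ∘ₗ LinearMap.snd ℂ V₁ V₂) 0

/-- The commutator `H = E ∘ F − F ∘ E`. -/
def Hop (e : V₁ →ₗ[ℂ] V₂) (f : V₂ →ₗ[ℂ] V₁) : (V₁ × V₂) →ₗ[ℂ] V₁ × V₂ :=
  Eop e ∘ₗ Fop f - Fop f ∘ₗ Eop e

/-- Self-adjointness of an operator on `V₁ × V₂` with respect to the product inner product. -/
def IsHermitianProd (H : (V₁ × V₂) →ₗ[ℂ] V₁ × V₂) : Prop :=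
  ∀ p q : V₁ × V₂,
    (inner ℂ ((H p).1) q.1 : ℂ) + (inner ℂ ((H p).2) q.2 : ℂ) =
      (inner ℂ p.1 ((H q).1) : ℂ) + (inner ℂ p.2 ((H q).2) : ℂ)

-- auxiliary simp lemmas

lemma Eop_apply (e : V₁ →ₗ[ℂ] V₂) (p : V₁ × V₂) : Eop e p = (0, e p.1) := rfl

lemma Fop_apply (f : V₂ →ₗ[ℂ] V₁) (p : V₁ × V₂) : Fop f p = (f p.2, 0) := rfl

lemma Hop_apply (e : V₁ →ₗ[ℂ] V₂) (f : V₂ →ₗ[ℂ] V₁) (p : V₁ × V₂) :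
    Hop e f p = (-(f (e p.1)), e (f p.2)) := by
  simp [Hop, Eop_apply, Fop_apply, Prod.ext_iff, LinearMap.sub_apply]

section MP

variable [FiniteDimensional ℂ V₁] [FiniteDimensional ℂ V₂]

noncomputable def mpAux (e : V₁ →ₗ[ℂ] V₂) :
    (LinearMap.ker e)ᗮ ≃ₗ[ℂ] LinearMap.range e :=
  LinearEquiv.ofBijective
    ((e ∘ₗ (LinearMap.ker e)ᗮ.subtype).codRestrict (LinearMap.range e)
      fun x => LinearMap.mem_range_self _ _)
    ⟨fun a b h => by
      have hv : e (a : V₁) = e (b : V₁) := congrArg Subtype.val h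
      have hab : (a : V₁) - b ∈ LinearMap.ker e := by
        simp [LinearMap.mem_ker, map_sub, hv]
      have hab' : (a : V₁) - b ∈ (LinearMap.ker e)ᗮ := Submodule.sub_mem _ a.2 b.2
      have h0 : (a : V₁) - b = 0 :=
        (Submodule.mem_bot ℂ).mp
          ((Submodule.orthogonal_disjoint (LinearMap.ker e)).le_bot ⟨hab, hab'⟩)
      exact Subtype.ext (sub_eq_zero.mp h0),
    by
      rintro ⟨y, x, rfl⟩
      refine ⟨Submodule.orthogonalProjectionOnto (LinearMap.ker e)ᗮ x, ?_⟩
      apply Subtype.ext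
      show e _ = e x
      have hmem : x - (Submodule.orthogonalProjectionOnto (LinearMap.ker e)ᗮ x : V₁) ∈ LinearMap.ker e := by
        have := Submodule.sub_starProjection_mem_orthogonal
          (K := (LinearMap.ker e)ᗮ) x
        rwa [Submodule.orthogonal_orthogonal] at this
      have := (LinearMap.mem_ker).mp hmem
      rw [map_sub, sub_eq_zero] at this
      exact this.symm⟩

lemma mpAux_coe (e : V₁ →ₗ[ℂ] V₂) (x : (LinearMap.ker e)ᗮ) :
    (mpAux e x : V₂) = e x := rfl

noncomputable def mp (e : V₁ →ₗ[ℂ] V₂) : V₂ →ₗ[ℂ] V₁ :=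
  (LinearMap.ker e)ᗮ.subtype ∘ₗ ((mpAux e).symm : LinearMap.range e →ₗ[ℂ] (LinearMap.ker e)ᗮ)
    ∘ₗ ((Submodule.orthogonalProjectionOnto (LinearMap.range e) : V₂ →L[ℂ] LinearMap.range e) : V₂ →ₗ[ℂ] LinearMap.range e)

lemma mp_mem (e : V₁ →ₗ[ℂ] V₂) (y : V₂) : mp e y ∈ (LinearMap.ker e)ᗮ := by
  simp only [mp, LinearMap.comp_apply, Submodule.subtype_apply]
  exact Submodule.coe_mem _

lemma e_mp (e : V₁ →ₗ[ℂ] V₂) (y : V₂) :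
    e (mp e y) = (Submodule.orthogonalProjectionOnto (LinearMap.range e) y : V₂) := by
  show e (((mpAux e).symm (Submodule.orthogonalProjectionOnto (LinearMap.range e) y) : V₁)) = _
  rw [← mpAux_coe, LinearEquiv.apply_symm_apply]

lemma mp_e (e : V₁ →ₗ[ℂ] V₂) (x : V₁) :
    mp e (e x) = (Submodule.orthogonalProjectionOnto (LinearMap.ker e)ᗮ x : V₁) := by
  have h1 : Submodule.orthogonalProjectionOnto (LinearMap.range e) (e x)
      = ⟨e x, LinearMap.mem_range_self e x⟩ :=
    Subtype.ext (Submodule.starProjection_eq_self_iff.mpr (LinearMap.mem_range_self e x))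
  have h2 : mpAux e (Submodule.orthogonalProjectionOnto (LinearMap.ker e)ᗮ x)
      = ⟨e x, LinearMap.mem_range_self e x⟩ := by
    apply Subtype.ext
    rw [mpAux_coe]
    have hmem : x - (Submodule.orthogonalProjectionOnto (LinearMap.ker e)ᗮ x : V₁) ∈ LinearMap.ker e := by
      have := Submodule.sub_starProjection_mem_orthogonal (K := (LinearMap.ker e)ᗮ) x
      rwa [Submodule.orthogonal_orthogonal] at this
    have := (LinearMap.mem_ker).mp hmem
    rw [map_sub, sub_eq_zero] at this
    exact this.symm
  show (((mpAux e).symm (Submodule.orthogonalProjectionOnto (LinearMap.range e) (e x))) : V₁) = _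
  rw [h1, ← h2, LinearEquiv.symm_apply_apply]



lemma mp_efe (e : V₁ →ₗ[ℂ] V₂) (x : V₁) : e (mp e (e x)) = e x := by
  rw [e_mp]
  exact Submodule.starProjection_eq_self_iff.mpr (LinearMap.mem_range_self e x)

lemma mp_fef (e : V₁ →ₗ[ℂ] V₂) (y : V₂) : mp e (e (mp e y)) = mp e y := by
  rw [mp_e]
  exact Submodule.starProjection_eq_self_iff.mpr (mp_mem e y)

lemma mp_fe_symm (e : V₁ →ₗ[ℂ] V₂) : (mp e ∘ₗ e).IsSymmetric := by
  intro x y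
  simp only [LinearMap.comp_apply, mp_e]
  exact Submodule.inner_starProjection_left_eq_right _ x y

lemma mp_ef_symm (e : V₁ →ₗ[ℂ] V₂) : (e ∘ₗ mp e).IsSymmetric := by
  intro x y
  simp only [LinearMap.comp_apply, e_mp]
  exact Submodule.inner_starProjection_left_eq_right _ x y

lemma pinv_unique (e : V₁ →ₗ[ℂ] V₂) (f g : V₂ →ₗ[ℂ] V₁)
    (hf1 : ∀ x, e (f (e x)) = e x) (hf2 : ∀ y, f (e (f y)) = f y)
    (hf3 : (f ∘ₗ e).IsSymmetric) (hf4 : (e ∘ₗ f).IsSymmetric)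
    (hg1 : ∀ x, e (g (e x)) = e x) (hg2 : ∀ y, g (e (g y)) = g y)
    (hg3 : (g ∘ₗ e).IsSymmetric) (hg4 : (e ∘ₗ g).IsSymmetric) : f = g := by
  have hfe : LinearMap.adjoint (f ∘ₗ e) = f ∘ₗ e := by
    rw [← LinearMap.star_eq_adjoint]
    exact (LinearMap.isSymmetric_iff_isSelfAdjoint _).mp hf3
  have hef : LinearMap.adjoint (e ∘ₗ f) = e ∘ₗ f := by
    rw [← LinearMap.star_eq_adjoint]
    exact (LinearMap.isSymmetric_iff_isSelfAdjoint _).mp hf4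
  have hge : LinearMap.adjoint (g ∘ₗ e) = g ∘ₗ e := by
    rw [← LinearMap.star_eq_adjoint]
    exact (LinearMap.isSymmetric_iff_isSelfAdjoint _).mp hg3
  have heg : LinearMap.adjoint (e ∘ₗ g) = e ∘ₗ g := by
    rw [← LinearMap.star_eq_adjoint]
    exact (LinearMap.isSymmetric_iff_isSelfAdjoint _).mp hg4
  have he_f : e ∘ₗ (f ∘ₗ e) = e := LinearMap.ext fun x => hf1 x
  have he_g' : (e ∘ₗ g) ∘ₗ e = e := LinearMap.ext fun x => hg1 x
  have he_g : e ∘ₗ (g ∘ₗ e) = e := LinearMap.ext fun x => hg1 x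
  have key1 : e ∘ₗ f = e ∘ₗ g := by
    calc e ∘ₗ f = LinearMap.adjoint (e ∘ₗ f) := hef.symm
      _ = LinearMap.adjoint f ∘ₗ LinearMap.adjoint e := LinearMap.adjoint_comp e f
      _ = LinearMap.adjoint f ∘ₗ LinearMap.adjoint ((e ∘ₗ g) ∘ₗ e) := by rw [he_g']
      _ = LinearMap.adjoint f ∘ₗ (LinearMap.adjoint e ∘ₗ LinearMap.adjoint (e ∘ₗ g)) := by
            rw [LinearMap.adjoint_comp]
      _ = LinearMap.adjoint f ∘ₗ (LinearMap.adjoint e ∘ₗ (e ∘ₗ g)) := by rw [heg]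
      _ = (LinearMap.adjoint f ∘ₗ LinearMap.adjoint e) ∘ₗ (e ∘ₗ g) :=
            LinearMap.ext fun _ => rfl
      _ = LinearMap.adjoint (e ∘ₗ f) ∘ₗ (e ∘ₗ g) := by rw [LinearMap.adjoint_comp]
      _ = (e ∘ₗ f) ∘ₗ (e ∘ₗ g) := by rw [hef]
      _ = (e ∘ₗ (f ∘ₗ e)) ∘ₗ g := LinearMap.ext fun _ => rfl
      _ = e ∘ₗ g := by rw [he_f]
  have key2 : f ∘ₗ e = g ∘ₗ e := by
    calc f ∘ₗ e = LinearMap.adjoint (f ∘ₗ e) := hfe.symm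
      _ = LinearMap.adjoint e ∘ₗ LinearMap.adjoint f := LinearMap.adjoint_comp f e
      _ = LinearMap.adjoint (e ∘ₗ (g ∘ₗ e)) ∘ₗ LinearMap.adjoint f := by rw [he_g]
      _ = (LinearMap.adjoint (g ∘ₗ e) ∘ₗ LinearMap.adjoint e) ∘ₗ LinearMap.adjoint f := by
            rw [LinearMap.adjoint_comp]
      _ = ((g ∘ₗ e) ∘ₗ LinearMap.adjoint e) ∘ₗ LinearMap.adjoint f := by rw [hge]
      _ = (g ∘ₗ e) ∘ₗ (LinearMap.adjoint e ∘ₗ LinearMap.adjoint f) :=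
            LinearMap.ext fun _ => rfl
      _ = (g ∘ₗ e) ∘ₗ LinearMap.adjoint (f ∘ₗ e) := by rw [LinearMap.adjoint_comp]
      _ = (g ∘ₗ e) ∘ₗ (f ∘ₗ e) := by rw [hfe]
      _ = g ∘ₗ (e ∘ₗ (f ∘ₗ e)) := LinearMap.ext fun _ => rfl
      _ = g ∘ₗ e := by rw [he_f]
  ext y
  calc f y = f (e (f y)) := (hf2 y).symm
    _ = f (e (g y)) := by
      have := LinearMap.ext_iff.mp key1 y
      simp only [LinearMap.comp_apply] at this
      rw [this]
    _ = g (e (g y)) := LinearMap.ext_iff.mp key2 (g y)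
    _ = g y := hg2 y

end MP

/-- Every linear map `e` between finite-dimensional complex inner product spaces embeds in a
unique way into an `sl₂`-triple `⟨E, H, F⟩` of operators of the block form above on `V₁ × V₂`
whose characteristic `H` is Hermitian. -/
theorem exists_unique_sl2_triple_hermitian_characteristic
    [FiniteDimensional ℂ V₁] [FiniteDimensional ℂ V₂] (e : V₁ →ₗ[ℂ] V₂) :
    ∃! f : V₂ →ₗ[ℂ] V₁,
      Hop e f ∘ₗ Eop e - Eop e ∘ₗ Hop e f = (2 : ℂ) • Eop e ∧
      Hop e f ∘ₗ Fop f - Fop f ∘ₗ Hop e f = (-2 : ℂ) • Fop f ∧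
      IsHermitianProd (Hop e f) := by
  have key : ∀ f : V₂ →ₗ[ℂ] V₁,
      (Hop e f ∘ₗ Eop e - Eop e ∘ₗ Hop e f = (2 : ℂ) • Eop e ∧
       Hop e f ∘ₗ Fop f - Fop f ∘ₗ Hop e f = (-2 : ℂ) • Fop f ∧
       IsHermitianProd (Hop e f)) ↔
      ((∀ x, e (f (e x)) = e x) ∧ (∀ y, f (e (f y)) = f y) ∧
       (f ∘ₗ e).IsSymmetric ∧ (e ∘ₗ f).IsSymmetric) := by
    intro f
    constructor
    · rintro ⟨h1, h2, h3⟩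
      refine ⟨fun x => ?_, fun y => ?_, fun x x' => ?_, fun y y' => ?_⟩
      · have hh := congrArg Prod.snd (LinearMap.ext_iff.mp h1 (x, 0))
        simp only [LinearMap.sub_apply, LinearMap.comp_apply, LinearMap.smul_apply, Hop_apply,
          Eop_apply, map_zero, map_neg, sub_neg_eq_add, Prod.snd_sub, Prod.smul_snd] at hh
        rw [← two_smul ℂ] at hh
        exact smul_right_injective V₂ two_ne_zero hh
      · have hh := congrArg Prod.fst (LinearMap.ext_iff.mp h2 (0, y))
        simp only [LinearMap.sub_apply, LinearMap.comp_apply, LinearMap.smul_apply, Hop_apply,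
          Fop_apply, map_zero, map_neg, sub_neg_eq_add, Prod.fst_sub, Prod.smul_fst] at hh
        have hh2 : (2 : ℂ) • f (e (f y)) = (2 : ℂ) • f y := by
          apply neg_injective
          rw [two_smul, neg_add, ← sub_eq_add_neg, hh, neg_smul]
        exact smul_right_injective V₁ two_ne_zero hh2
      · have hh := h3 (x, 0) (x', 0)
        simp only [Hop_apply, map_zero, inner_zero_left, inner_zero_right, add_zero,
          inner_neg_left, inner_neg_right] at hh
        simpa [LinearMap.comp_apply] using neg_inj.mp hh
      · have hh := h3 (0, y) (0, y')
        simp only [Hop_apply, map_zero, inner_zero_left, inner_zero_right, zero_add, neg_zero,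
          inner_neg_left, inner_neg_right] at hh
        simp only [LinearMap.comp_apply]
        exact hh
    · rintro ⟨h1, h2, h3, h4⟩
      have h3' : ∀ x y, (inner ℂ (f (e x)) y : ℂ) = inner ℂ x (f (e y)) := fun x y => h3 x y
      have h4' : ∀ x y, (inner ℂ (e (f x)) y : ℂ) = inner ℂ x (e (f y)) := fun x y => h4 x y
      refine ⟨?_, ?_, ?_⟩
      · apply LinearMap.ext; intro p
        refine Prod.ext ?_ ?_ <;>
          simp [Hop_apply, Eop_apply, LinearMap.sub_apply, LinearMap.comp_apply,
            LinearMap.smul_apply, h1 p.1, two_smul, sub_neg_eq_add]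
      · apply LinearMap.ext; intro p
        refine Prod.ext ?_ ?_ <;>
          simp [Hop_apply, Fop_apply, LinearMap.sub_apply, LinearMap.comp_apply,
            LinearMap.smul_apply, h2 p.2, two_smul, neg_smul, sub_eq_add_neg]
      · intro p q
        simp only [Hop_apply, inner_neg_left, inner_neg_right]
        rw [h3' p.1 q.1, h4' p.2 q.2]
  refine ⟨mp e, (key (mp e)).mpr ⟨mp_efe e, mp_fef e, mp_fe_symm e, mp_ef_symm e⟩, ?_⟩
  intro g hg
  obtain ⟨hg1, hg2, hg3, hg4⟩ := (key g).mp hg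
  exact pinv_unique e g (mp e) hg1 hg2 hg3 hg4 (mp_efe e) (mp_fef e) (mp_fe_symm e) (mp_ef_symm e)
end

section
/- For every complex matrix A of size k × n there exist a complex matrix B of size n × k and a positive-definite Hermitian matrix P of size n × n such that: 2A = 2·A·B·A − (A·B)ᵀ·A, 2B = 2·B·A·B − B·(A·B)ᵀ, P·(B·A) = (B·A)ᴴ·P, and (A·B − (A·B)ᵀ)ᴴ = A·B − (A·B)ᵀ. -/
open Matrix
open scoped ComplexOrder InnerProductSpace
set_option maxHeartbeats 1000000

private lemma gmul {k q : ℕ} (X : Matrix (Fin k) (Fin q) ℂ) (v : Fin k → ℂ) (i : Fin k) :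
    ((X * Xᴴ) *ᵥ v) i = ∑ t, (∑ l, star (X l t) * v l) * X i t := by
  simp only [Matrix.mulVec, dotProduct, Matrix.mul_apply, Matrix.conjTranspose_apply]
  simp_rw [Finset.sum_mul]
  rw [Finset.sum_comm]
  refine Finset.sum_congr rfl fun t _ => Finset.sum_congr rfl fun l _ => by ring

lemma exists_data (k n : ℕ) (A : Matrix (Fin k) (Fin n) ℂ) :
    ∃ (m p : ℕ) (U : Matrix (Fin k) (Fin m) ℂ) (W : Matrix (Fin k) (Fin p) ℂ)
      (ZU : Matrix (Fin n) (Fin m) ℂ) (ZW : Matrix (Fin n) (Fin p) ℂ)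
      (R : Matrix (Fin p) (Fin p) ℂ),
      Uᴴ * U = 1 ∧ Uᵀ * U = 0 ∧ Uᴴ * W = 0 ∧ Wᵀ * U = 0 ∧ Wᴴ * W = 1 ∧
      Wᵀ * W * R = 1 ∧ R * (Wᵀ * W) = 1 ∧
      U * (Uᴴ * A) + W * (Wᴴ * A) = A ∧ A * ZU = U ∧ A * ZW = W := by
  classical
  let Lm : (Fin n → ℂ) →ₗ[ℂ] (EuclideanSpace ℂ (Fin k)) :=
    { toFun := fun c => WithLp.toLp 2 (A.mulVec c)
      map_add' := fun a b => by simp [Matrix.mulVec_add]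
      map_smul' := fun r a => by simp [Matrix.mulVec_smul] }
  let Lmb : (Fin n → ℂ) →ₗ[ℂ] (EuclideanSpace ℂ (Fin k)) :=
    { toFun := fun c => WithLp.toLp 2 ((A.map (starRingEnd ℂ)).mulVec c)
      map_add' := fun a b => by simp [Matrix.mulVec_add]
      map_smul' := fun r a => by simp [Matrix.mulVec_smul] }
  let V : Submodule ℂ (EuclideanSpace ℂ (Fin k)) := LinearMap.range Lm
  let Vb : Submodule ℂ (EuclideanSpace ℂ (Fin k)) := LinearMap.range Lmb
  let V0 : Submodule ℂ (EuclideanSpace ℂ (Fin k)) := V ⊓ Vbᗮ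
  let V1 : Submodule ℂ (EuclideanSpace ℂ (Fin k)) := V ⊓ V0ᗮ
  have hV0V : V0 ≤ V := inf_le_left
  have hV0Vb : V0 ≤ Vbᗮ := inf_le_right
  have hV1V : V1 ≤ V := inf_le_left
  have hV1V0 : V1 ≤ V0ᗮ := inf_le_right
  -- inner product formula
  have hipE : ∀ x y : (EuclideanSpace ℂ (Fin k)), ⟪x, y⟫_ℂ = ∑ i, star (x i) * y i := by
    intro x y
    simp only [PiLp.inner_apply, RCLike.inner_apply, starRingEnd_apply]
    exact Finset.sum_congr rfl fun _ _ => mul_comm _ _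
  -- sums apply pointwise
  have sapply : ∀ {q : ℕ} (f : Fin q → (EuclideanSpace ℂ (Fin k))) (i : Fin k), (∑ s, f s) i = ∑ s, f s i :=
    fun f i => by simp
  -- conjugation maps V into Vb
  have hconj : ∀ v : (EuclideanSpace ℂ (Fin k)), v ∈ V → (WithLp.toLp 2 (fun i => star (v i)) : (EuclideanSpace ℂ (Fin k))) ∈ Vb := by
    rintro v ⟨c, rfl⟩
    refine ⟨star c, ?_⟩
    ext i
    show ∑ j, (A.map (starRingEnd ℂ)) i j * (star c) j = star (A.mulVec c i)
    simp [Matrix.mulVec, dotProduct, Matrix.map_apply, star_sum]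
  -- membership of V
  have hmemV : ∀ v : (EuclideanSpace ℂ (Fin k)), v ∈ V ↔ ∃ c : Fin n → ℂ, A.mulVec c = v := by
    intro v; exact ⟨fun ⟨c, hc⟩ => ⟨c, congrArg WithLp.ofLp hc⟩, fun ⟨c, hc⟩ => ⟨c, congrArg (WithLp.toLp 2) hc⟩⟩
  -- bases
  set bU := stdOrthonormalBasis ℂ V0 with hbU
  set bW := stdOrthonormalBasis ℂ V1 with hbW
  set m := Module.finrank ℂ V0
  set p := Module.finrank ℂ V1
  set U : Matrix (Fin k) (Fin m) ℂ := Matrix.of (fun i t => (bU t : (EuclideanSpace ℂ (Fin k))) i) with hU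
  set W : Matrix (Fin k) (Fin p) ℂ := Matrix.of (fun i s => (bW s : (EuclideanSpace ℂ (Fin k))) i) with hW
  -- the matrix identities
  have h1 : Uᴴ * U = 1 := by
    ext t s
    have h := (orthonormal_iff_ite.mp bU.orthonormal) t s
    rw [Submodule.coe_inner, hipE] at h
    simp only [Matrix.mul_apply, Matrix.conjTranspose_apply, hU, Matrix.of_apply,
      Matrix.one_apply]
    simpa using h
  have h5 : Wᴴ * W = 1 := by
    ext t s
    have h := (orthonormal_iff_ite.mp bW.orthonormal) t s
    rw [Submodule.coe_inner, hipE] at h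
    simp only [Matrix.mul_apply, Matrix.conjTranspose_apply, hW, Matrix.of_apply,
      Matrix.one_apply]
    simpa using h
  have h2 : Uᵀ * U = 0 := by
    ext t s
    have horth : ((bU s : (EuclideanSpace ℂ (Fin k)))) ∈ Vbᗮ := hV0Vb (bU s).2
    have h := (Submodule.mem_orthogonal Vb ((bU s : (EuclideanSpace ℂ (Fin k))))).mp horth
      (WithLp.toLp 2 (fun i => star ((bU t : (EuclideanSpace ℂ (Fin k))) i)) : (EuclideanSpace ℂ (Fin k))) (hconj _ (hV0V (bU t).2))
    rw [hipE] at h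
    simp only [star_star] at h
    simp only [Matrix.mul_apply, Matrix.transpose_apply, hU, Matrix.of_apply, Matrix.zero_apply]
    simpa using h
  have h3 : Uᴴ * W = 0 := by
    ext t s
    have horth : ((bW s : (EuclideanSpace ℂ (Fin k)))) ∈ V0ᗮ := hV1V0 (bW s).2
    have h := (Submodule.mem_orthogonal V0 ((bW s : (EuclideanSpace ℂ (Fin k))))).mp horth ((bU t : (EuclideanSpace ℂ (Fin k)))) (bU t).2
    rw [hipE] at h
    simp only [Matrix.mul_apply, Matrix.conjTranspose_apply, hU, hW, Matrix.of_apply,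
      Matrix.zero_apply]
    simpa using h
  have h4 : Wᵀ * U = 0 := by
    ext t s
    have horth : ((bU s : (EuclideanSpace ℂ (Fin k)))) ∈ Vbᗮ := hV0Vb (bU s).2
    have h := (Submodule.mem_orthogonal Vb ((bU s : (EuclideanSpace ℂ (Fin k))))).mp horth
      (WithLp.toLp 2 (fun i => star ((bW t : (EuclideanSpace ℂ (Fin k))) i)) : (EuclideanSpace ℂ (Fin k))) (hconj _ (hV1V (bW t).2))
    rw [hipE] at h
    simp only [star_star] at h
    simp only [Matrix.mul_apply, Matrix.transpose_apply, hU, hW, Matrix.of_apply,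
      Matrix.zero_apply]
    simpa using h
  -- projections
  have pU : ∀ v : (EuclideanSpace ℂ (Fin k)), v ∈ V0 → (U * Uᴴ) *ᵥ v = v := by
    intro v hv
    have h1' := bU.sum_repr ⟨v, hv⟩
    have h2' : ∑ t, bU.repr ⟨v, hv⟩ t • (bU t : (EuclideanSpace ℂ (Fin k))) = v := by
      have h3' := congrArg (Subtype.val : V0 → (EuclideanSpace ℂ (Fin k))) h1'
      simpa [AddSubmonoidClass.coe_finset_sum] using h3'
    funext i
    rw [gmul]
    have hid : ∀ t, ∑ l, star (U l t) * v l = bU.repr ⟨v, hv⟩ t := by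
      intro t
      rw [bU.repr_apply_apply, Submodule.coe_inner, hipE]
      simp [hU]
    simp_rw [hid]
    have h3' := congrFun (congrArg WithLp.ofLp h2') i
    rw [sapply] at h3'
    simp only [PiLp.smul_apply, smul_eq_mul] at h3'
    simpa [hU] using h3'
  have pW : ∀ v : (EuclideanSpace ℂ (Fin k)), v ∈ V1 → (W * Wᴴ) *ᵥ v = v := by
    intro v hv
    have h1' := bW.sum_repr ⟨v, hv⟩
    have h2' : ∑ t, bW.repr ⟨v, hv⟩ t • (bW t : (EuclideanSpace ℂ (Fin k))) = v := by
      have h3' := congrArg (Subtype.val : V1 → (EuclideanSpace ℂ (Fin k))) h1'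
      simpa [AddSubmonoidClass.coe_finset_sum] using h3'
    funext i
    rw [gmul]
    have hid : ∀ t, ∑ l, star (W l t) * v l = bW.repr ⟨v, hv⟩ t := by
      intro t
      rw [bW.repr_apply_apply, Submodule.coe_inner, hipE]
      simp [hW]
    simp_rw [hid]
    have h3' := congrFun (congrArg WithLp.ofLp h2') i
    rw [sapply] at h3'
    simp only [PiLp.smul_apply, smul_eq_mul] at h3'
    simpa [hW] using h3'
  have zU : ∀ v : (EuclideanSpace ℂ (Fin k)), v ∈ V0ᗮ → (U * Uᴴ) *ᵥ v = 0 := by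
    intro v hv
    funext i
    rw [gmul]
    refine Finset.sum_eq_zero fun t _ => ?_
    have h := (Submodule.mem_orthogonal V0 v).mp hv ((bU t : (EuclideanSpace ℂ (Fin k)))) (bU t).2
    rw [hipE] at h
    have hzz : (∑ l, star (U l t) * v l) = 0 := h
    rw [hzz, zero_mul]
  have zW : ∀ v : (EuclideanSpace ℂ (Fin k)), v ∈ V0 → (W * Wᴴ) *ᵥ v = 0 := by
    intro v hv
    funext i
    rw [gmul]
    refine Finset.sum_eq_zero fun t _ => ?_
    have horth : ((bW t : (EuclideanSpace ℂ (Fin k)))) ∈ V0ᗮ := hV1V0 (bW t).2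
    have h : ⟪v, (bW t : (EuclideanSpace ℂ (Fin k)))⟫_ℂ = 0 := (Submodule.mem_orthogonal V0 _).mp horth v hv
    have h' : ⟪(bW t : (EuclideanSpace ℂ (Fin k))), v⟫_ℂ = 0 := inner_eq_zero_symm.mp h
    rw [hipE] at h'
    have hzz : (∑ l, star (W l t) * v l) = 0 := h'
    rw [hzz, zero_mul]
  -- the full projection identity
  have hMv : ∀ v : (EuclideanSpace ℂ (Fin k)), v ∈ V → (U * Uᴴ + W * Wᴴ) *ᵥ v = v := by
    intro v hv
    have hv0 : ((V0.orthogonalProjectionOnto v : V0) : (EuclideanSpace ℂ (Fin k))) ∈ V0 := (V0.orthogonalProjectionOnto v).2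
    set v0 : (EuclideanSpace ℂ (Fin k)) := ((V0.orthogonalProjectionOnto v : V0) : (EuclideanSpace ℂ (Fin k))) with hv0def
    have hv1o : v - v0 ∈ V0ᗮ := Submodule.sub_starProjection_mem_orthogonal (K := V0) v
    have hv1V : v - v0 ∈ V := V.sub_mem hv (hV0V hv0)
    have hv1 : v - v0 ∈ V1 := ⟨hv1V, hv1o⟩
    have hsplitv : v = v0 + (v - v0) := by abel
    conv_lhs => rw [hsplitv]
    rw [WithLp.ofLp_add, Matrix.mulVec_add, Matrix.add_mulVec, Matrix.add_mulVec, pU v0 hv0, zW v0 hv0,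
      zU (v - v0) hv1o, pW (v - v0) hv1]
    simp [WithLp.ofLp_sub]
  -- columns of A lie in V
  have hcol : ∀ j, (WithLp.toLp 2 (fun i => A i j) : (EuclideanSpace ℂ (Fin k))) ∈ V := by
    intro j
    refine ⟨Pi.single j 1, ?_⟩
    show WithLp.toLp 2 (A.mulVec (Pi.single j 1)) = _
    ext i
    simp [Matrix.mulVec_single]
  have h8 : U * (Uᴴ * A) + W * (Wᴴ * A) = A := by
    have hMA : (U * Uᴴ + W * Wᴴ) * A = A := by
      ext i j
      have h := congrFun (hMv _ (hcol j)) i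
      simpa [Matrix.mul_apply, Matrix.mulVec, dotProduct] using h
    calc U * (Uᴴ * A) + W * (Wᴴ * A) = (U * Uᴴ + W * Wᴴ) * A := by
          rw [Matrix.add_mul, Matrix.mul_assoc, Matrix.mul_assoc]
      _ = A := hMA
  -- preimages of the basis vectors
  have hUpre : ∀ t, ∃ c : Fin n → ℂ, A.mulVec c = (bU t : (EuclideanSpace ℂ (Fin k))) :=
    fun t => (hmemV _).mp (hV0V (bU t).2)
  have hWpre : ∀ t, ∃ c : Fin n → ℂ, A.mulVec c = (bW t : (EuclideanSpace ℂ (Fin k))) :=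
    fun t => (hmemV _).mp (hV1V (bW t).2)
  set ZU : Matrix (Fin n) (Fin m) ℂ := Matrix.of (fun j t => Classical.choose (hUpre t) j)
    with hZUdef
  set ZW : Matrix (Fin n) (Fin p) ℂ := Matrix.of (fun j t => Classical.choose (hWpre t) j)
    with hZWdef
  have h9 : A * ZU = U := by
    ext i t
    have := congrFun (Classical.choose_spec (hUpre t)) i
    simpa [Matrix.mul_apply, Matrix.mulVec, dotProduct, hZUdef, hU] using this
  have h10 : A * ZW = W := by
    ext i t
    have := congrFun (Classical.choose_spec (hWpre t)) i
    simpa [Matrix.mul_apply, Matrix.mulVec, dotProduct, hZWdef, hW] using this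
  -- invertibility of Wᵀ * W
  have hUtW : Uᵀ * W = 0 := by
    have := congrArg Matrix.transpose h4
    simpa [Matrix.transpose_mul] using this
  have hker : ∀ z : Fin p → ℂ, (Wᵀ * W) *ᵥ z = 0 → z = 0 := by
    intro z hz
    set w : (EuclideanSpace ℂ (Fin k)) := WithLp.toLp 2 (W.mulVec z) with hwdef
    have hwV1 : w ∈ V1 := by
      have hcoe : w = ((∑ s, z s • bW s : V1) : (EuclideanSpace ℂ (Fin k))) := by
        ext i
        rw [show ((∑ s, z s • bW s : V1) : (EuclideanSpace ℂ (Fin k))) = ∑ s, z s • (bW s : (EuclideanSpace ℂ (Fin k))) by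
          simp [AddSubmonoidClass.coe_finset_sum]]
        rw [sapply]
        simp [hwdef, Matrix.mulVec, dotProduct, hW, mul_comm]
      rw [hcoe]
      exact (∑ s, z s • bW s : V1).2
    have hAtw : Aᵀ *ᵥ w = 0 := by
      have hAtWmat : Aᵀ * W = (Wᴴ * A)ᵀ * (Wᵀ * W) := by
        conv_lhs => rw [← h8]
        rw [Matrix.transpose_add, Matrix.transpose_mul, Matrix.transpose_mul,
          Matrix.add_mul, Matrix.mul_assoc, Matrix.mul_assoc, hUtW, Matrix.mul_zero,
          Matrix.mul_zero, zero_add, Matrix.transpose_mul]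
        rw [Matrix.mul_assoc]
      rw [hwdef, WithLp.ofLp_toLp, Matrix.mulVec_mulVec, hAtWmat, ← Matrix.mulVec_mulVec, hz,
        Matrix.mulVec_zero]
    have hwVb : w ∈ Vbᗮ := by
      rw [Submodule.mem_orthogonal]
      rintro y ⟨c, rfl⟩
      show ⟪(Lmb c : (EuclideanSpace ℂ (Fin k))), w⟫_ℂ = 0
      rw [hipE]
      have hy : ∀ i, star ((Lmb c : (EuclideanSpace ℂ (Fin k))) i) = ∑ j, A i j * star (c j) := by
        intro i
        show star ((A.map (starRingEnd ℂ)).mulVec c i) = _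
        simp [Matrix.mulVec, dotProduct, Matrix.map_apply, star_sum]
      simp_rw [hy, Finset.sum_mul]
      rw [Finset.sum_comm]
      have : ∀ j, ∑ i, A i j * star (c j) * w i = star (c j) * ((Aᵀ *ᵥ w) j) := by
        intro j
        rw [show (Aᵀ *ᵥ w) j = ∑ i, A i j * w i by
          simp [Matrix.mulVec, dotProduct, Matrix.transpose_apply]]
        rw [Finset.mul_sum]
        exact Finset.sum_congr rfl fun i _ => by ring
      simp_rw [this, hAtw]
      simp
    have hwV0 : w ∈ V0 := ⟨hV1V hwV1, hwVb⟩
    have hw0 : w = 0 := by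
      have h := (Submodule.mem_orthogonal V0 w).mp (hV1V0 hwV1) w hwV0
      exact inner_self_eq_zero.mp h
    have : (Wᴴ * W) *ᵥ z = 0 := by
      rw [← Matrix.mulVec_mulVec, show W *ᵥ z = (w : Fin k → ℂ) from rfl, hw0]
      simp [Matrix.mulVec_zero]
    rw [h5, Matrix.one_mulVec] at this
    exact this
  have hGinj : Function.Injective ((Wᵀ * W).mulVec) := by
    intro a b hab
    have := hker (a - b) (by rw [Matrix.mulVec_sub, hab, sub_self])
    exact sub_eq_zero.mp this
  have hGunit : IsUnit (Wᵀ * W) := Matrix.mulVec_injective_iff_isUnit.mp hGinj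
  have hGdet : IsUnit (Wᵀ * W).det := (Matrix.isUnit_iff_isUnit_det _).mp hGunit
  refine ⟨m, p, U, W, ZU, ZW, (Wᵀ * W)⁻¹, h1, h2, h3, h4, h5, ?_, ?_, h8, h9, h10⟩
  · exact Matrix.mul_nonsing_inv _ hGdet
  · exact Matrix.nonsing_inv_mul _ hGdet

lemma key_from_data (k n m p : ℕ) (A : Matrix (Fin k) (Fin n) ℂ)
    (U : Matrix (Fin k) (Fin m) ℂ) (W : Matrix (Fin k) (Fin p) ℂ)
    (ZU : Matrix (Fin n) (Fin m) ℂ) (ZW : Matrix (Fin n) (Fin p) ℂ)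
    (R : Matrix (Fin p) (Fin p) ℂ)
    (hUU : Uᴴ * U = 1) (hUtU : Uᵀ * U = 0) (hUW : Uᴴ * W = 0) (hWtU : Wᵀ * U = 0)
    (hWW : Wᴴ * W = 1) (hR : Wᵀ * W * R = 1) (hR' : R * (Wᵀ * W) = 1)
    (hA : U * (Uᴴ * A) + W * (Wᴴ * A) = A)
    (hZU : A * ZU = U) (hZW : A * ZW = W) :
    ∃ (B : Matrix (Fin n) (Fin k) ℂ) (P : Matrix (Fin n) (Fin n) ℂ),
      P.PosDef ∧
      (2 : ℂ) • A = (2 : ℂ) • (A * B * A) - (A * B)ᵀ * A ∧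
      (2 : ℂ) • B = (2 : ℂ) • (B * A * B) - B * (A * B)ᵀ ∧
      P * (B * A) = (B * A)ᴴ * P ∧
      (A * B - (A * B)ᵀ)ᴴ = A * B - (A * B)ᵀ := by
  -- derived transposes
  have hRt : Rᵀ = R := by
    have h1 : Rᵀ * (Wᵀ * W) = 1 := by
      have := congrArg Matrix.transpose hR
      simpa [Matrix.transpose_mul, Matrix.mul_assoc] using this
    calc Rᵀ = Rᵀ * (Wᵀ * W * R) := by rw [hR, Matrix.mul_one]
      _ = (Rᵀ * (Wᵀ * W)) * R := by simp only [Matrix.mul_assoc]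
      _ = R := by rw [h1, Matrix.one_mul]
  have hUtW : Uᵀ * W = 0 := by
    have := congrArg Matrix.transpose hWtU
    simpa [Matrix.transpose_mul] using this
  have hWhU : Wᴴ * U = 0 := by
    have := congrArg Matrix.conjTranspose hUW
    simpa [Matrix.conjTranspose_mul] using this
  -- the conjugate of U
  set Ub : Matrix (Fin k) (Fin m) ℂ := U.map (starRingEnd ℂ) with hUb
  have hUth : Uᵀᴴ = Ub := by
    ext i j; simp [hUb, Matrix.conjTranspose_apply, Matrix.transpose_apply]
  have hUht : Uᴴᵀ = Ub := by
    ext i j; simp [hUb, Matrix.conjTranspose_apply, Matrix.transpose_apply]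
  have hUbh : Ubᴴ = Uᵀ := by
    ext i j; simp [hUb, Matrix.conjTranspose_apply, Matrix.transpose_apply]
  have hUhUb : Uᴴ * Ub = 0 := by
    ext i j
    have h0 : (Uᵀ * U) j i = 0 := by rw [hUtU]; simp
    have h2 : (Uᴴ * Ub) i j = star ((Uᵀ * U) j i) := by
      simp [Matrix.mul_apply, Matrix.conjTranspose_apply, Matrix.transpose_apply, hUb,
        Matrix.map_apply, map_sum, mul_comm]
    rw [h2, h0, star_zero]; simp
  have hWtUb : Wᵀ * Ub = 0 := by
    ext i j
    have h0 : (Wᴴ * U) i j = 0 := by rw [hWhU]; simp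
    have h2 : (Wᵀ * Ub) i j = star ((Wᴴ * U) i j) := by
      simp [Matrix.mul_apply, Matrix.conjTranspose_apply, Matrix.transpose_apply, hUb,
        Matrix.map_apply, map_sum, mul_comm]
    rw [h2, h0, star_zero]; simp
  clear_value Ub
  -- Q
  set Q : Matrix (Fin k) (Fin k) ℂ := W * R * Wᵀ with hQ
  clear_value Q
  have hQt : Qᵀ = Q := by
    rw [hQ]; simp [Matrix.transpose_mul, hRt, Matrix.mul_assoc]
  have hQQ : Q * Q = Q := by
    rw [hQ]
    calc W * R * Wᵀ * (W * R * Wᵀ) = W * (R * (Wᵀ * W * R)) * Wᵀ := by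
          simp only [Matrix.mul_assoc]
      _ = W * R * Wᵀ := by rw [hR]; simp only [Matrix.mul_one, Matrix.mul_assoc]
  have hQU : Q * U = 0 := by
    rw [hQ]
    calc W * R * Wᵀ * U = W * R * (Wᵀ * U) := by simp only [Matrix.mul_assoc]
      _ = 0 := by rw [hWtU, Matrix.mul_zero]
  have hUhQ : Uᴴ * Q = 0 := by
    rw [hQ]
    calc Uᴴ * (W * R * Wᵀ) = (Uᴴ * W) * (R * Wᵀ) := by simp only [Matrix.mul_assoc]
      _ = 0 := by rw [hUW, Matrix.zero_mul]
  have hQUb : Q * Ub = 0 := by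
    rw [hQ]
    calc W * R * Wᵀ * Ub = W * R * (Wᵀ * Ub) := by simp only [Matrix.mul_assoc]
      _ = 0 := by rw [hWtUb, Matrix.mul_zero]
  have hQW : Q * W = W := by
    rw [hQ]
    calc W * R * Wᵀ * W = W * (R * (Wᵀ * W)) := by simp only [Matrix.mul_assoc]
      _ = W := by rw [hR', Matrix.mul_one]
  -- S
  set S : Matrix (Fin k) (Fin k) ℂ := (2 : ℂ) • Q + U * Uᴴ with hS
  clear_value S
  have hSt : Sᵀ = (2 : ℂ) • Q + Ub * Uᵀ := by
    rw [hS]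
    simp only [Matrix.transpose_smul, Matrix.transpose_add, Matrix.transpose_mul, hQt, hUht]
  -- C and B
  set C : Matrix (Fin n) (Fin k) ℂ := ZU * Uᴴ + ZW * Wᴴ with hC
  clear_value C
  have hAC : A * C = U * Uᴴ + W * Wᴴ := by
    rw [hC, Matrix.mul_add, ← Matrix.mul_assoc, ← Matrix.mul_assoc, hZU, hZW]
  have hACU : A * C * U = U := by
    rw [hAC, Matrix.add_mul, Matrix.mul_assoc, Matrix.mul_assoc, hUU, hWhU]
    simp
  have hACW : A * C * W = W := by
    rw [hAC, Matrix.add_mul, Matrix.mul_assoc, Matrix.mul_assoc, hUW, hWW]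
    simp
  have hACQ : A * C * Q = Q := by
    rw [hQ]
    calc A * C * (W * R * Wᵀ) = (A * C * W) * (R * Wᵀ) := by simp only [Matrix.mul_assoc]
      _ = W * R * Wᵀ := by rw [hACW, Matrix.mul_assoc]
  have hACQm : ∀ (q : ℕ) (X : Matrix (Fin k) (Fin q) ℂ), A * (C * (Q * X)) = Q * X := by
    intro q X
    rw [← Matrix.mul_assoc, ← Matrix.mul_assoc, hACQ]
  have hACUm : ∀ (q : ℕ) (X : Matrix (Fin m) (Fin q) ℂ), A * (C * (U * X)) = U * X := by
    intro q X
    rw [← Matrix.mul_assoc, ← Matrix.mul_assoc, hACU]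
  have hACS : A * C * S = S := by
    rw [hS, Matrix.mul_add, Matrix.mul_smul, hACQ, ← Matrix.mul_assoc (A * C) U Uᴴ, hACU]
  set B : Matrix (Fin n) (Fin k) ℂ := C * S with hB
  clear_value B
  have hAB : A * B = S := by rw [hB, ← Matrix.mul_assoc, hACS]
  -- products with A
  have hQA : Q * A = W * (Wᴴ * A) := by
    conv_lhs => rw [← hA]
    rw [Matrix.mul_add Q, ← Matrix.mul_assoc Q U (Uᴴ * A), hQU, Matrix.zero_mul, zero_add,
      ← Matrix.mul_assoc Q W (Wᴴ * A), hQW]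
  have hUbUtA : Ub * (Uᵀ * A) = 0 := by
    conv_lhs => rw [← hA]
    rw [Matrix.mul_add Uᵀ, ← Matrix.mul_assoc Uᵀ U (Uᴴ * A), hUtU,
      ← Matrix.mul_assoc Uᵀ W (Wᴴ * A), hUtW]
    simp
  have hSA : S * A = (2 : ℂ) • (W * (Wᴴ * A)) + U * (Uᴴ * A) := by
    rw [hS, Matrix.add_mul, Matrix.smul_mul, hQA, Matrix.mul_assoc]
  have hStA : Sᵀ * A = (2 : ℂ) • (W * (Wᴴ * A)) := by
    rw [hSt, Matrix.add_mul, Matrix.smul_mul, hQA, Matrix.mul_assoc, hUbUtA, add_zero]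
  -- S * S and S * Sᵀ
  have hQUUh : Q * (U * Uᴴ) = 0 := by rw [← Matrix.mul_assoc, hQU, Matrix.zero_mul]
  have hUUhQ : U * Uᴴ * Q = 0 := by rw [Matrix.mul_assoc, hUhQ, Matrix.mul_zero]
  have hUUhUUh : U * Uᴴ * (U * Uᴴ) = U * Uᴴ := by
    rw [Matrix.mul_assoc, ← Matrix.mul_assoc Uᴴ U Uᴴ, hUU, Matrix.one_mul]
  have hUUhUbUt : U * Uᴴ * (Ub * Uᵀ) = 0 := by
    rw [Matrix.mul_assoc, ← Matrix.mul_assoc Uᴴ Ub Uᵀ, hUhUb, Matrix.zero_mul, Matrix.mul_zero]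
  have hSS : S * S = (4 : ℂ) • Q + U * Uᴴ := by
    rw [hS]
    simp only [Matrix.add_mul, Matrix.mul_add, Matrix.smul_mul, Matrix.mul_smul]
    rw [hQQ, hQUUh, hUUhQ, hUUhUUh]
    simp only [smul_zero, add_zero, zero_add]
    module
  have hQUbUt : Q * (Ub * Uᵀ) = 0 := by
    rw [← Matrix.mul_assoc, hQUb, Matrix.zero_mul]
  have hSSt : S * Sᵀ = (4 : ℂ) • Q := by
    rw [hSt, hS]
    simp only [Matrix.add_mul, Matrix.mul_add, Matrix.smul_mul, Matrix.mul_smul]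
    rw [hQQ, hQUbUt, hUUhQ, hUUhUbUt]
    simp only [smul_zero, add_zero, zero_add, Matrix.mul_zero]
    module
  -- condition 1
  have cond1 : (2 : ℂ) • A = (2 : ℂ) • (A * B * A) - (A * B)ᵀ * A := by
    rw [hAB, hSA, hStA]
    conv_lhs => rw [← hA]
    module
  -- condition 2
  have cond2 : (2 : ℂ) • B = (2 : ℂ) • (B * A * B) - B * (A * B)ᵀ := by
    have hBAB : B * A * B = C * (S * S) := by
      rw [hB]
      rw [show C * S * A * (C * S) = C * (S * (A * (C * S))) from by simp only [Matrix.mul_assoc]]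
      rw [← Matrix.mul_assoc A C S, hACS]
    have hBSt : B * (A * B)ᵀ = C * (S * Sᵀ) := by
      rw [hAB, hB, Matrix.mul_assoc]
    rw [hBAB, hBSt, hSS, hSSt, hB, hS]
    simp only [Matrix.mul_add, Matrix.mul_smul, Matrix.add_mul, Matrix.smul_mul]
    module
  -- condition 4
  have cond4 : (A * B - (A * B)ᵀ)ᴴ = A * B - (A * B)ᵀ := by
    have hSmSt : A * B - (A * B)ᵀ = U * Uᴴ - Ub * Uᵀ := by
      rw [hAB, hSt, hS]; module
    rw [hSmSt, Matrix.conjTranspose_sub, Matrix.conjTranspose_mul, Matrix.conjTranspose_mul,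
      Matrix.conjTranspose_conjTranspose, hUth, hUbh]
  -- spectral projectors of T = B * A
  set tQ : Matrix (Fin n) (Fin n) ℂ := C * (Q * A) with htQ
  set tU : Matrix (Fin n) (Fin n) ℂ := C * (U * (Uᴴ * A)) with htU
  clear_value tQ tU
  set t0 : Matrix (Fin n) (Fin n) ℂ := 1 - tQ - tU with ht0
  clear_value t0
  have hT : B * A = (2 : ℂ) • tQ + tU := by
    rw [hB, hS, htQ, htU]
    simp only [Matrix.add_mul, Matrix.smul_mul, Matrix.mul_add, Matrix.mul_smul,
      Matrix.mul_assoc]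
  have htQQ : tQ * tQ = tQ := by
    rw [htQ]
    rw [show C * (Q * A) * (C * (Q * A)) = C * (Q * (A * (C * (Q * A)))) from by
      simp only [Matrix.mul_assoc]]
    rw [hACQm, ← Matrix.mul_assoc Q Q A, hQQ]
  have htUU : tU * tU = tU := by
    rw [htU]
    rw [show C * (U * (Uᴴ * A)) * (C * (U * (Uᴴ * A))) =
        C * (U * (Uᴴ * (A * (C * (U * (Uᴴ * A)))))) from by simp only [Matrix.mul_assoc]]
    rw [hACUm, ← Matrix.mul_assoc Uᴴ U (Uᴴ * A), hUU, Matrix.one_mul]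
  have htQU : tQ * tU = 0 := by
    rw [htQ, htU]
    rw [show C * (Q * A) * (C * (U * (Uᴴ * A))) = C * (Q * (A * (C * (U * (Uᴴ * A))))) from by
      simp only [Matrix.mul_assoc]]
    rw [hACUm, ← Matrix.mul_assoc Q U (Uᴴ * A), hQU, Matrix.zero_mul, Matrix.mul_zero]
  have htUQ : tU * tQ = 0 := by
    rw [htQ, htU]
    rw [show C * (U * (Uᴴ * A)) * (C * (Q * A)) = C * (U * (Uᴴ * (A * (C * (Q * A))))) from by
      simp only [Matrix.mul_assoc]]
    rw [hACQm, ← Matrix.mul_assoc Uᴴ Q A, hUhQ, Matrix.zero_mul, Matrix.mul_zero,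
      Matrix.mul_zero]
  have hTtQ : (B * A) * tQ = (2 : ℂ) • tQ := by
    rw [hT, Matrix.add_mul, Matrix.smul_mul, htQQ, htUQ, add_zero]
  have htQT : tQ * (B * A) = (2 : ℂ) • tQ := by
    rw [hT, Matrix.mul_add, Matrix.mul_smul, htQQ, htQU, add_zero]
  have hTtU : (B * A) * tU = tU := by
    rw [hT, Matrix.add_mul, Matrix.smul_mul, htQU, htUU, smul_zero, zero_add]
  have htUT : tU * (B * A) = tU := by
    rw [hT, Matrix.mul_add, Matrix.mul_smul, htUQ, htUU, smul_zero, zero_add]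
  have ht0T : t0 * (B * A) = 0 := by
    rw [ht0, Matrix.sub_mul, Matrix.sub_mul, Matrix.one_mul, htQT, htUT, hT]
    module
  set P : Matrix (Fin n) (Fin n) ℂ := t0ᴴ * t0 + tQᴴ * tQ + tUᴴ * tU with hP
  clear_value P
  have cond3 : P * (B * A) = (B * A)ᴴ * P := by
    have l0 : t0ᴴ * t0 * (B * A) = 0 := by rw [Matrix.mul_assoc, ht0T, Matrix.mul_zero]
    have lQ : tQᴴ * tQ * (B * A) = (2 : ℂ) • (tQᴴ * tQ) := by
      rw [Matrix.mul_assoc, htQT, Matrix.mul_smul]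
    have lU : tUᴴ * tU * (B * A) = tUᴴ * tU := by rw [Matrix.mul_assoc, htUT]
    have r0 : (B * A)ᴴ * (t0ᴴ * t0) = 0 := by
      rw [← Matrix.mul_assoc, ← Matrix.conjTranspose_mul t0 (B * A), ht0T,
        Matrix.conjTranspose_zero, Matrix.zero_mul]
    have rQ : (B * A)ᴴ * (tQᴴ * tQ) = (2 : ℂ) • (tQᴴ * tQ) := by
      rw [← Matrix.mul_assoc, ← Matrix.conjTranspose_mul tQ (B * A), htQT]
      simp [Matrix.smul_mul]
    have rU : (B * A)ᴴ * (tUᴴ * tU) = tUᴴ * tU := by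
      rw [← Matrix.mul_assoc, ← Matrix.conjTranspose_mul tU (B * A), htUT]
    rw [hP, Matrix.add_mul, Matrix.add_mul, Matrix.mul_add, Matrix.mul_add, l0, lQ, lU,
      r0, rQ, rU]
  have hPposdef : P.PosDef := by
    refine Matrix.posDef_iff_dotProduct_mulVec.mpr ⟨?_, ?_⟩
    · rw [hP]
      exact ((Matrix.isHermitian_conjTranspose_mul_self t0).add
        (Matrix.isHermitian_conjTranspose_mul_self tQ)).add
        (Matrix.isHermitian_conjTranspose_mul_self tU)
    · intro x hx
      have hsplit : dotProduct (star x) (P *ᵥ x) =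
          dotProduct (star x) ((t0ᴴ * t0) *ᵥ x) + dotProduct (star x) ((tQᴴ * tQ) *ᵥ x)
            + dotProduct (star x) ((tUᴴ * tU) *ᵥ x) := by
        rw [hP, Matrix.add_mulVec, Matrix.add_mulVec, dotProduct_add,
          dotProduct_add]
      have h0 := (Matrix.posSemidef_conjTranspose_mul_self t0).dotProduct_mulVec_nonneg x
      have hQd := (Matrix.posSemidef_conjTranspose_mul_self tQ).dotProduct_mulVec_nonneg x
      have hUd := (Matrix.posSemidef_conjTranspose_mul_self tU).dotProduct_mulVec_nonneg x
      have hnonneg : 0 ≤ dotProduct (star x) (P *ᵥ x) := by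
        rw [hsplit]
        exact add_nonneg (add_nonneg h0 hQd) hUd
      rcases lt_or_eq_of_le hnonneg with hlt | heq
      · exact hlt
      · exfalso
        have key : ∀ M : Matrix (Fin n) (Fin n) ℂ,
            dotProduct (star x) ((Mᴴ * M) *ᵥ x) = dotProduct (star (M *ᵥ x)) (M *ᵥ x) := by
          intro M
          rw [← Matrix.mulVec_mulVec, Matrix.dotProduct_mulVec, ← Matrix.star_mulVec]
        have hsum : dotProduct (star x) ((t0ᴴ * t0) *ᵥ x) + dotProduct (star x) ((tQᴴ * tQ) *ᵥ x)
            + dotProduct (star x) ((tUᴴ * tU) *ᵥ x) = 0 := by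
          rw [← hsplit]; exact heq.symm
        have e0 : dotProduct (star x) ((t0ᴴ * t0) *ᵥ x) = 0 := by
          refine le_antisymm ?_ h0
          have h2 := add_nonneg hQd hUd
          calc dotProduct (star x) ((t0ᴴ * t0) *ᵥ x)
              = -(dotProduct (star x) ((tQᴴ * tQ) *ᵥ x)
                  + dotProduct (star x) ((tUᴴ * tU) *ᵥ x)) := by linear_combination hsum
            _ ≤ 0 := neg_nonpos.mpr h2
        have eQ : dotProduct (star x) ((tQᴴ * tQ) *ᵥ x) = 0 := by
          refine le_antisymm ?_ hQd
          have h2 := add_nonneg h0 hUd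
          calc dotProduct (star x) ((tQᴴ * tQ) *ᵥ x)
              = -(dotProduct (star x) ((t0ᴴ * t0) *ᵥ x)
                  + dotProduct (star x) ((tUᴴ * tU) *ᵥ x)) := by linear_combination hsum
            _ ≤ 0 := neg_nonpos.mpr h2
        have eU : dotProduct (star x) ((tUᴴ * tU) *ᵥ x) = 0 := by
          refine le_antisymm ?_ hUd
          have h2 := add_nonneg h0 hQd
          calc dotProduct (star x) ((tUᴴ * tU) *ᵥ x)
              = -(dotProduct (star x) ((t0ᴴ * t0) *ᵥ x)
                  + dotProduct (star x) ((tQᴴ * tQ) *ᵥ x)) := by linear_combination hsum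
            _ ≤ 0 := neg_nonpos.mpr h2
        have v0 : t0 *ᵥ x = 0 := by
          rw [key t0] at e0
          exact dotProduct_star_self_eq_zero.mp e0
        have vQ : tQ *ᵥ x = 0 := by
          rw [key tQ] at eQ
          exact dotProduct_star_self_eq_zero.mp eQ
        have vU : tU *ᵥ x = 0 := by
          rw [key tU] at eU
          exact dotProduct_star_self_eq_zero.mp eU
        have hx0 : x = 0 := by
          have hsum1 : t0 + tQ + tU = 1 := by rw [ht0]; abel
          calc x = (t0 + tQ + tU) *ᵥ x := by rw [hsum1, Matrix.one_mulVec]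
            _ = t0 *ᵥ x + tQ *ᵥ x + tU *ᵥ x := by
                rw [Matrix.add_mulVec, Matrix.add_mulVec]
            _ = 0 := by rw [v0, vQ, vU]; simp
        exact hx hx0
  exact ⟨B, P, hPposdef, cond1, cond2, cond3, cond4⟩


/-- Key lemma, orthogonal case: for every complex `k × n` matrix `A` (a linear map
`ℂⁿ → ℂᵏ`, where `ℂᵏ` carries the standard symmetric bilinear form `ω(x,y) = xᵀy` and the
standard Hermitian form) there exist `B : ℂᵏ → ℂⁿ` and a Hermitian inner product on `ℂⁿ`
(given by a positive-definite Hermitian matrix `P`) such that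
`2A = 2ABA − (AB)ᵀA`, `2B = 2BAB − B(AB)ᵀ`, `BA` is Hermitian for `P`,
and `AB − (AB)ᵀ` is Hermitian for the standard form. -/
theorem key_lemma_orthogonal (k n : ℕ) (A : Matrix (Fin k) (Fin n) ℂ) :
    ∃ (B : Matrix (Fin n) (Fin k) ℂ) (P : Matrix (Fin n) (Fin n) ℂ),
      P.PosDef ∧
      (2 : ℂ) • A = (2 : ℂ) • (A * B * A) - (A * B)ᵀ * A ∧
      (2 : ℂ) • B = (2 : ℂ) • (B * A * B) - B * (A * B)ᵀ ∧
      P * (B * A) = (B * A)ᴴ * P ∧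
      (A * B - (A * B)ᵀ)ᴴ = A * B - (A * B)ᵀ := by
  obtain ⟨m, p, U, W, ZU, ZW, R, h1, h2, h3, h4, h5, h6, h7, h8, h9, h10⟩ := exists_data k n A
  exact key_from_data k n m p A U W ZU ZW R h1 h2 h3 h4 h5 h6 h7 h8 h9 h10
end

section
/- Let V be a finite-dimensional complex vector space, let 𝒬 be a set of quadratic forms on V, and let C = {v ∈ V | q(v) = 0 for all q ∈ 𝒬} be their common zero cone. If both linear maps A : ℂ² → V and B : ℂ² → V are degenerate, then there exists a linear map E : ℂ² → ℂ² such that A + B ∘ E is not degenerate. -/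
/-- A linear map `A : ℂ² → V` is degenerate (with respect to a cone `C ⊆ V`) if its range is
`2`-dimensional and `C ∩ range A` is a line, i.e. the projectivization of the range of `A`
meets the projective variety in exactly one point. -/
def Degenerate {V : Type*} [AddCommGroup V] [Module ℂ V] (C : Set V)
    (A : (Fin 2 → ℂ) →ₗ[ℂ] V) : Prop :=
  Module.finrank ℂ (LinearMap.range A) = 2 ∧
  ∃ L : Submodule ℂ V, Module.finrank ℂ L = 1 ∧
    C ∩ (LinearMap.range A : Set V) = (L : Set V)

open Module Submodule

/-- Every `2`-dimensional subspace of `range A ⊔ range B` intersecting `range B` trivially is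
the range of `A + B ∘ₗ E` for some `E` (it is a graph over `range A`). -/
lemma exists_perturb_range_eq {V : Type*} [AddCommGroup V] [Module ℂ V]
    [FiniteDimensional ℂ V] (A B : (Fin 2 → ℂ) →ₗ[ℂ] V) (W : Submodule ℂ V)
    (hWle : W ≤ LinearMap.range A ⊔ LinearMap.range B)
    (hW2 : Module.finrank ℂ W = 2)
    (hWB : W ⊓ LinearMap.range B = ⊥) :
    ∃ E : (Fin 2 → ℂ) →ₗ[ℂ] (Fin 2 → ℂ), LinearMap.range (A + B ∘ₗ E) = W := by
  classical
  let bW : Basis (Fin 2) ℂ W := finBasisOfFinrankEq ℂ W hW2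
  set w : Fin 2 → V := fun i => (bW i : V) with hwdef
  have hwW : ∀ i, w i ∈ W := fun i => (bW i).2
  have hmem : ∀ i, ∃ x : Fin 2 → ℂ, ∃ y : Fin 2 → ℂ, A x + B y = w i := by
    intro i
    have h := hWle (hwW i)
    rw [Submodule.mem_sup] at h
    obtain ⟨u, hu, v, hv, huv⟩ := h
    obtain ⟨x, hx⟩ := hu
    obtain ⟨y, hy⟩ := hv
    exact ⟨x, y, by rw [hx, hy, huv]⟩
  choose x y hxy using hmem
  have hLIw : LinearIndependent ℂ w :=
    bW.linearIndependent.map' W.subtype (Submodule.ker_subtype W)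
  have hLIx : LinearIndependent ℂ x := by
    rw [Fintype.linearIndependent_iff] at hLIw ⊢
    intro g hg
    have key : ∑ i, g i • w i = A (∑ i, g i • x i) + B (∑ i, g i • y i) := by
      rw [map_sum, map_sum, ← Finset.sum_add_distrib]
      refine Finset.sum_congr rfl fun i _ => ?_
      rw [map_smul, map_smul, ← smul_add, hxy]
    rw [hg, map_zero, zero_add] at key
    have hWmem : ∑ i, g i • w i ∈ W :=
      Submodule.sum_mem _ fun i _ => Submodule.smul_mem _ _ (hwW i)
    have hBmem : ∑ i, g i • w i ∈ LinearMap.range B := key ▸ LinearMap.mem_range_self B _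
    have : ∑ i, g i • w i ∈ W ⊓ LinearMap.range B := ⟨hWmem, hBmem⟩
    rw [hWB, Submodule.mem_bot] at this
    exact hLIw g this
  have hcard : Fintype.card (Fin 2) = Module.finrank ℂ (Fin 2 → ℂ) := by simp
  let bx : Basis (Fin 2) ℂ (Fin 2 → ℂ) := basisOfLinearIndependentOfCardEqFinrank hLIx hcard
  have hbx : ⇑bx = x := coe_basisOfLinearIndependentOfCardEqFinrank hLIx hcard
  refine ⟨Basis.constr bx ℂ y, ?_⟩
  have hEi : ∀ i, (A + B ∘ₗ Basis.constr bx ℂ y) (x i) = w i := by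
    intro i
    have hxi : x i = bx i := by rw [hbx]
    rw [LinearMap.add_apply, LinearMap.comp_apply, hxi, Basis.constr_basis, ← hxi, hxy]
  have hfun : ((A + B ∘ₗ Basis.constr bx ℂ y) ∘ ⇑bx) = w := by
    funext i
    show (A + B ∘ₗ Basis.constr bx ℂ y) (bx i) = w i
    rw [hbx]
    exact hEi i
  have hrange : Set.range ((A + B ∘ₗ Basis.constr bx ℂ y) ∘ ⇑bx) = Set.range w := by
    rw [hfun]
  rw [LinearMap.range_eq_map, ← bx.span_eq, Submodule.map_span, ← Set.range_comp, hrange]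
  have hw_img : Set.range w = W.subtype '' Set.range ⇑bW := by
    rw [← Set.range_comp]; rfl
  rw [hw_img, ← Submodule.map_span, bW.span_eq, Submodule.map_top, Submodule.range_subtype]

/-- A `1`-dimensional submodule is spanned by a nonzero vector. -/
lemma exists_span_of_finrank_one {V : Type*} [AddCommGroup V] [Module ℂ V]
    [FiniteDimensional ℂ V] (L : Submodule ℂ V) (hL : Module.finrank ℂ L = 1) :
    ∃ v : V, v ≠ 0 ∧ L = (ℂ ∙ v) := by
  have h0 : 0 < Module.finrank ℂ L := by omega
  have : Nontrivial L := Module.nontrivial_of_finrank_pos h0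
  obtain ⟨u, hu⟩ := exists_ne (0 : L)
  have hv0 : (u : V) ≠ 0 := fun h => hu (Subtype.ext h)
  have hle : (ℂ ∙ (u : V)) ≤ L := by
    rw [Submodule.span_singleton_le_iff_mem]; exact u.2
  have := Submodule.eq_of_le_of_finrank_le hle (by rw [hL, finrank_span_singleton hv0])
  exact ⟨u, hv0, this.symm⟩

lemma exists_not_mem_span {V : Type*} [AddCommGroup V] [Module ℂ V]
    [FiniteDimensional ℂ V] (S : Submodule ℂ V) (hS : Module.finrank ℂ S = 2) (v : V) :
    ∃ u, u ∈ S ∧ u ∉ (ℂ ∙ v) := by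
  by_contra h
  push_neg at h
  have hle : S ≤ (ℂ ∙ v) := fun u hu => h u hu
  have h1 : Module.finrank ℂ (ℂ ∙ v) ≤ 1 := by
    rcases eq_or_ne v 0 with rfl | hv
    · rw [Submodule.span_zero_singleton]; simp
    · rw [finrank_span_singleton hv]
  have := Submodule.finrank_mono hle
  omega

lemma range_pair_eq {V : Type*} [AddCommGroup V] [Module ℂ V] (u v : V) :
    Set.range ![u, v] = {u, v} := by
  ext z
  constructor
  · rintro ⟨i, rfl⟩
    fin_cases i
    · left; rfl
    · right; rfl
  · rintro (rfl | rfl)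
    · exact ⟨0, rfl⟩
    · exact ⟨1, rfl⟩

/-- Proposition 1(B): if `A, B : ℂ² → V` are both degenerate with respect to the common zero
cone of a set of quadratic forms, then `A + B ∘ E` is non-degenerate for some `E : ℂ² → ℂ²`. -/
theorem degenerate_perturb_degenerate {V : Type*} [AddCommGroup V] [Module ℂ V]
    [FiniteDimensional ℂ V] (𝒬 : Set (QuadraticForm ℂ V))
    (A B : (Fin 2 → ℂ) →ₗ[ℂ] V)
    (hA : Degenerate {v : V | ∀ q ∈ 𝒬, q v = 0} A)
    (hB : Degenerate {v : V | ∀ q ∈ 𝒬, q v = 0} B) :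
    ∃ E : (Fin 2 → ℂ) →ₗ[ℂ] (Fin 2 → ℂ),
      ¬ Degenerate {v : V | ∀ q ∈ 𝒬, q v = 0} (A + B ∘ₗ E) := by
  classical
  set Cset := {v : V | ∀ q ∈ 𝒬, q v = 0} with hCset
  by_cases hcap : LinearMap.range A ⊓ LinearMap.range B = ⊥
  · -- Case 2 : the ranges intersect trivially.
    by_contra hcon
    push_neg at hcon
    obtain ⟨hA2, LA, hLA1, hLAeq⟩ := hA
    obtain ⟨hB2, LB, hLB1, hLBeq⟩ := hB
    obtain ⟨a, ha0, hLAspan⟩ := exists_span_of_finrank_one LA hLA1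
    obtain ⟨b, hb0, hLBspan⟩ := exists_span_of_finrank_one LB hLB1
    rw [hLAspan] at hLAeq
    rw [hLBspan] at hLBeq
    have haCRA : a ∈ Cset ∩ (LinearMap.range A : Set V) := by
      rw [hLAeq]; exact Submodule.mem_span_singleton_self a
    have haC : a ∈ Cset := haCRA.1
    have haRA : a ∈ LinearMap.range A := haCRA.2
    have hbCRB : b ∈ Cset ∩ (LinearMap.range B : Set V) := by
      rw [hLBeq]; exact Submodule.mem_span_singleton_self b
    have hbC : b ∈ Cset := hbCRB.1
    have hbRB : b ∈ LinearMap.range B := hbCRB.2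
    obtain ⟨a', ha'A, ha'⟩ := exists_not_mem_span (LinearMap.range A) hA2 a
    obtain ⟨b', hb'B, hb'⟩ := exists_not_mem_span (LinearMap.range B) hB2 b
    have hAB0 : ∀ u : V, u ∈ LinearMap.range A → u ∈ LinearMap.range B → u = 0 := by
      intro u h1 h2
      have : u ∈ LinearMap.range A ⊓ LinearMap.range B := ⟨h1, h2⟩
      rwa [hcap, Submodule.mem_bot] at this
    -- independence of a and a'
    have haa' : ∀ c₁ c₂ : ℂ, c₁ • a + c₂ • a' = 0 → c₁ = 0 ∧ c₂ = 0 := by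
      intro c₁ c₂ h
      have hc2 : c₂ = 0 := by
        by_contra hc2
        apply ha'
        have : a' = (-(c₂⁻¹ * c₁)) • a := by
          have : c₂ • a' = -(c₁ • a) := by
            rw [eq_neg_iff_add_eq_zero, add_comm]; exact h
          calc a' = c₂⁻¹ • (c₂ • a') := by rw [smul_smul, inv_mul_cancel₀ hc2, one_smul]
            _ = c₂⁻¹ • (-(c₁ • a)) := by rw [this]
            _ = (-(c₂⁻¹ * c₁)) • a := by rw [smul_neg, smul_smul, neg_smul]
        rw [this]
        exact Submodule.smul_mem _ _ (Submodule.mem_span_singleton_self a)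
      refine ⟨?_, hc2⟩
      rw [hc2, zero_smul, add_zero, smul_eq_zero] at h
      exact h.resolve_right ha0
    -- Step (iii) : every point of the cone inside range A ⊔ range B lies in (ℂ∙a) ⊔ range B
    have hPi : ∀ v : V, v ∈ Cset → v ∈ LinearMap.range A ⊔ LinearMap.range B →
        v ∈ (ℂ ∙ a) ⊔ LinearMap.range B := by
      intro v hvC hvU
      by_contra hvPi
      have hIndep : ∀ c₁ c₂ : ℂ, c₁ • a + c₂ • v = 0 → c₁ = 0 ∧ c₂ = 0 := by
        intro c₁ c₂ h
        have hc2 : c₂ = 0 := by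
          by_contra hc2
          apply hvPi
          have hv' : v = (-(c₂⁻¹ * c₁)) • a := by
            have : c₂ • v = -(c₁ • a) := by
              rw [eq_neg_iff_add_eq_zero, add_comm]; exact h
            calc v = c₂⁻¹ • (c₂ • v) := by rw [smul_smul, inv_mul_cancel₀ hc2, one_smul]
              _ = c₂⁻¹ • (-(c₁ • a)) := by rw [this]
              _ = (-(c₂⁻¹ * c₁)) • a := by rw [smul_neg, smul_smul, neg_smul]
          rw [hv']
          exact Submodule.mem_sup_left
            (Submodule.smul_mem _ _ (Submodule.mem_span_singleton_self a))
        refine ⟨?_, hc2⟩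
        rw [hc2, zero_smul, add_zero, smul_eq_zero] at h
        exact h.resolve_right ha0
      have hLI : LinearIndependent ℂ ![a, v] := LinearIndependent.pair_iff.mpr hIndep
      set W := Submodule.span ℂ (Set.range ![a, v]) with hWdef
      have hWpair : W = Submodule.span ℂ ({a, v} : Set V) := by rw [hWdef, range_pair_eq]
      have haW : a ∈ W := by
        rw [hWpair]; exact Submodule.subset_span (by left; rfl)
      have hvW : v ∈ W := by
        rw [hWpair]; exact Submodule.subset_span (by right; rfl)
      have hW2 : Module.finrank ℂ W = 2 := by
        rw [hWdef, finrank_span_eq_card hLI]; simp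
      have hWle : W ≤ LinearMap.range A ⊔ LinearMap.range B := by
        rw [hWpair, Submodule.span_le]
        rintro u (rfl | rfl)
        · exact Submodule.mem_sup_left haRA
        · exact hvU
      have hWB : W ⊓ LinearMap.range B = ⊥ := by
        rw [eq_bot_iff]
        rintro u ⟨huW, huB⟩
        rw [hWpair] at huW
        obtain ⟨c₁, c₂, hc⟩ := Submodule.mem_span_pair.mp huW
        have hc2 : c₂ = 0 := by
          by_contra hc2
          apply hvPi
          have hv' : v = c₂⁻¹ • u - (c₂⁻¹ * c₁) • a := by
            have : c₂ • v = u - c₁ • a := by rw [← hc]; abel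
            calc v = c₂⁻¹ • (c₂ • v) := by rw [smul_smul, inv_mul_cancel₀ hc2, one_smul]
              _ = c₂⁻¹ • (u - c₁ • a) := by rw [this]
              _ = c₂⁻¹ • u - (c₂⁻¹ * c₁) • a := by rw [smul_sub, smul_smul]
          rw [hv']
          exact Submodule.sub_mem _ (Submodule.mem_sup_right (Submodule.smul_mem _ _ huB))
            (Submodule.mem_sup_left
              (Submodule.smul_mem _ _ (Submodule.mem_span_singleton_self a)))
        rw [hc2, zero_smul, add_zero] at hc
        have huA : u ∈ LinearMap.range A := hc ▸ Submodule.smul_mem _ _ haRA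
        rw [Submodule.mem_bot]
        exact hAB0 u huA huB
      obtain ⟨E, hE⟩ := exists_perturb_range_eq A B W hWle hW2 hWB
      obtain ⟨-, L, hL1, hLeq⟩ := hcon E
      rw [hE] at hLeq
      have haL : a ∈ L := by
        have : a ∈ Cset ∩ (W : Set V) := ⟨haC, haW⟩
        rwa [hLeq] at this
      have hvL : v ∈ L := by
        have : v ∈ Cset ∩ (W : Set V) := ⟨hvC, hvW⟩
        rwa [hLeq] at this
      have hWleL : W ≤ L := by
        rw [hWpair, Submodule.span_le]
        rintro u (rfl | rfl)
        · exact haL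
        · exact hvL
      have := Submodule.finrank_mono hWleL
      omega
    -- Step (ii) : a + t • b' lies in the cone for every t
    have hpC : ∀ t : ℂ, (a + t • b') ∈ Cset := by
      intro t
      set p := a + t • b' with hpdef
      have hp0 : p ≠ 0 := by
        intro h
        have ha' : a = -(t • b') := by rw [eq_neg_iff_add_eq_zero]; exact h
        have : a ∈ LinearMap.range B := by
          rw [ha']; exact Submodule.neg_mem _ (Submodule.smul_mem _ _ hb'B)
        exact ha0 (hAB0 a haRA this)
      have hIndep : ∀ c₁ c₂ : ℂ, c₁ • p + c₂ • a' = 0 → c₁ = 0 ∧ c₂ = 0 := by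
        intro c₁ c₂ h
        have hsplit : c₁ • a + c₂ • a' = -((c₁ * t) • b') := by
          rw [eq_neg_iff_add_eq_zero, ← h, hpdef]
          rw [smul_add, smul_smul]
          abel
        have hmA : c₁ • a + c₂ • a' ∈ LinearMap.range A :=
          Submodule.add_mem _ (Submodule.smul_mem _ _ haRA) (Submodule.smul_mem _ _ ha'A)
        have hmB : c₁ • a + c₂ • a' ∈ LinearMap.range B := by
          rw [hsplit]; exact Submodule.neg_mem _ (Submodule.smul_mem _ _ hb'B)
        have h0 : c₁ • a + c₂ • a' = 0 := hAB0 _ hmA hmB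
        exact haa' c₁ c₂ h0
      have hLI : LinearIndependent ℂ ![p, a'] := LinearIndependent.pair_iff.mpr hIndep
      set W := Submodule.span ℂ (Set.range ![p, a']) with hWdef
      have hWpair : W = Submodule.span ℂ ({p, a'} : Set V) := by rw [hWdef, range_pair_eq]
      have hpW : p ∈ W := by
        rw [hWpair]; exact Submodule.subset_span (by left; rfl)
      have hW2 : Module.finrank ℂ W = 2 := by
        rw [hWdef, finrank_span_eq_card hLI]; simp
      have hpU : p ∈ LinearMap.range A ⊔ LinearMap.range B := by
        rw [hpdef]
        exact Submodule.add_mem _ (Submodule.mem_sup_left haRA)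
          (Submodule.mem_sup_right (Submodule.smul_mem _ _ hb'B))
      have hWle : W ≤ LinearMap.range A ⊔ LinearMap.range B := by
        rw [hWpair, Submodule.span_le]
        rintro u (rfl | rfl)
        · exact hpU
        · exact Submodule.mem_sup_left ha'A
      have hWB : W ⊓ LinearMap.range B = ⊥ := by
        rw [eq_bot_iff]
        rintro u ⟨huW, huB⟩
        rw [hWpair] at huW
        obtain ⟨c₁, c₂, hc⟩ := Submodule.mem_span_pair.mp huW
        have hsplit : c₁ • a + c₂ • a' = u - (c₁ * t) • b' := by
          rw [← hc, hpdef, smul_add, smul_smul]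
          abel
        have hmA : c₁ • a + c₂ • a' ∈ LinearMap.range A :=
          Submodule.add_mem _ (Submodule.smul_mem _ _ haRA) (Submodule.smul_mem _ _ ha'A)
        have hmB : c₁ • a + c₂ • a' ∈ LinearMap.range B := by
          rw [hsplit]
          exact Submodule.sub_mem _ huB (Submodule.smul_mem _ _ hb'B)
        have h0 : c₁ • a + c₂ • a' = 0 := hAB0 _ hmA hmB
        obtain ⟨hc1, hc2⟩ := haa' c₁ c₂ h0
        rw [Submodule.mem_bot, ← hc, hc1, hc2, zero_smul, zero_smul, add_zero]
      obtain ⟨E, hE⟩ := exists_perturb_range_eq A B W hWle hW2 hWB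
      obtain ⟨-, L, hL1, hLeq⟩ := hcon E
      rw [hE] at hLeq
      have hsub : ∀ u : V, u ∈ Cset → u ∈ W → u ∈ (ℂ ∙ p) := by
        intro u huC huW
        have huPi : u ∈ (ℂ ∙ a) ⊔ LinearMap.range B := hPi u huC (hWle huW)
        obtain ⟨s, hs, r, hr, hsr⟩ := Submodule.mem_sup.mp huPi
        obtain ⟨lam, rfl⟩ := Submodule.mem_span_singleton.mp hs
        rw [hWpair] at huW
        obtain ⟨c₁, c₂, hc⟩ := Submodule.mem_span_pair.mp huW
        have hsplit : (c₁ - lam) • a + c₂ • a' = r - (c₁ * t) • b' := by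
          rw [sub_smul]
          have : c₁ • p + c₂ • a' = lam • a + r := by rw [hc, hsr]
          rw [hpdef, smul_add, smul_smul] at this
          have h' : c₁ • a + (c₁ * t) • b' + c₂ • a' - lam • a = r := by
            rw [this]; abel
          rw [← h']; abel
        have hmA : (c₁ - lam) • a + c₂ • a' ∈ LinearMap.range A :=
          Submodule.add_mem _ (Submodule.smul_mem _ _ haRA) (Submodule.smul_mem _ _ ha'A)
        have hmB : (c₁ - lam) • a + c₂ • a' ∈ LinearMap.range B := by
          rw [hsplit]
          exact Submodule.sub_mem _ hr (Submodule.smul_mem _ _ hb'B)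
        have h0 := hAB0 _ hmA hmB
        have hc2 : c₂ = 0 := by
          by_contra hc2
          apply ha'
          have : a' = (-(c₂⁻¹ * (c₁ - lam))) • a := by
            have h1 : c₂ • a' = -((c₁ - lam) • a) := by
              rw [eq_neg_iff_add_eq_zero, add_comm]; exact h0
            calc a' = c₂⁻¹ • (c₂ • a') := by rw [smul_smul, inv_mul_cancel₀ hc2, one_smul]
              _ = c₂⁻¹ • (-((c₁ - lam) • a)) := by rw [h1]
              _ = (-(c₂⁻¹ * (c₁ - lam))) • a := by rw [smul_neg, smul_smul, neg_smul]
          rw [this]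
          exact Submodule.smul_mem _ _ (Submodule.mem_span_singleton_self a)
        rw [hc2, zero_smul, add_zero] at hc
        rw [← hc]
        exact Submodule.smul_mem _ _ (Submodule.mem_span_singleton_self p)
      have hLle : L ≤ (ℂ ∙ p) := by
        intro u huL
        have : u ∈ Cset ∩ (W : Set V) := by rw [hLeq]; exact huL
        exact hsub u this.1 this.2
      have hLeqp : L = (ℂ ∙ p) :=
        Submodule.eq_of_le_of_finrank_le hLle (by rw [hL1, finrank_span_singleton hp0])
      have hpL : p ∈ L := by rw [hLeqp]; exact Submodule.mem_span_singleton_self p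
      have : p ∈ Cset ∩ (W : Set V) := by rw [hLeq]; exact hpL
      exact this.1
    -- Final step : q b' = 0 for all q, contradiction with b' ∉ ℂ∙b
    have hqb' : b' ∈ Cset := by
      intro q hq
      have h1 : q (a + b') = 0 := by
        have := hpC 1 q hq
        rwa [one_smul] at this
      have h2 : q (a + -b') = 0 := by
        have := hpC (-1) q hq
        rwa [neg_one_smul] at this
      have ha0q : q a = 0 := haC q hq
      have e1 : QuadraticMap.polar ⇑q a b' = q (a + b') - q a - q b' := rfl
      have e2 : QuadraticMap.polar ⇑q a (-b') = q (a + -b') - q a - q (-b') := rfl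
      have e3 : q (-b') = q b' := by
        have := QuadraticMap.map_smul q (-1 : ℂ) b'
        rw [neg_one_smul] at this
        rw [this, smul_eq_mul]
        ring
      have e4 : QuadraticMap.polar ⇑q a (-b') = -QuadraticMap.polar ⇑q a b' :=
        QuadraticMap.polar_neg_right q a b'
      rw [e3] at e2
      rw [h1, ha0q] at e1
      rw [h2, ha0q] at e2
      rw [e1] at e4
      rw [e2] at e4
      -- e4 : 0 - 0 - q b' = -(0 - 0 - q b')  ⇒  q b' = 0
      have : (2 : ℂ) * q b' = 0 := by linear_combination -e4
      have h2ne : (2 : ℂ) ≠ 0 := two_ne_zero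
      exact (mul_eq_zero.mp this).resolve_left h2ne
    have : b' ∈ Cset ∩ (LinearMap.range B : Set V) := ⟨hqb', hb'B⟩
    rw [hLBeq] at this
    exact hb' this
  · -- Case 1 : the ranges intersect nontrivially; kill the rank.
    obtain ⟨w, hw, hw0⟩ := (Submodule.ne_bot_iff _).mp hcap
    obtain ⟨hwA, hwB⟩ := hw
    obtain ⟨x, hx⟩ := hwA
    obtain ⟨y, hy⟩ := hwB
    have hx0 : x ≠ 0 := by
      intro h
      rw [h, map_zero] at hx
      exact hw0 hx.symm
    obtain ⟨i, hi⟩ : ∃ i, x i ≠ 0 := by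
      by_contra h
      push_neg at h
      exact hx0 (funext h)
    set φ : (Fin 2 → ℂ) →ₗ[ℂ] ℂ := (x i)⁻¹ • LinearMap.proj i with hφ
    set E : (Fin 2 → ℂ) →ₗ[ℂ] (Fin 2 → ℂ) := φ.smulRight (-y) with hEdef
    have hEx : E x = -y := by
      rw [hEdef, LinearMap.smulRight_apply, hφ]
      simp only [LinearMap.smul_apply, LinearMap.proj_apply, smul_eq_mul]
      rw [inv_mul_cancel₀ hi, one_smul]
    have hker : (A + B ∘ₗ E) x = 0 := by
      rw [LinearMap.add_apply, LinearMap.comp_apply, hEx, map_neg, hx, hy, add_neg_cancel]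
    refine ⟨E, fun hD => ?_⟩
    have h2 := hD.1
    have hrn := LinearMap.finrank_range_add_finrank_ker (A + B ∘ₗ E)
    have hdom : Module.finrank ℂ (Fin 2 → ℂ) = 2 := by simp
    rw [hdom, h2] at hrn
    have hker0 : Module.finrank ℂ (LinearMap.ker (A + B ∘ₗ E)) = 0 := by omega
    have hbot : LinearMap.ker (A + B ∘ₗ E) = ⊥ := Submodule.finrank_eq_zero.mp hker0
    have : x ∈ LinearMap.ker (A + B ∘ₗ E) := LinearMap.mem_ker.mpr hker
    rw [hbot, Submodule.mem_bot] at this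
    exact hx0 this
end

section
/- Let V be a finite-dimensional complex vector space, let 𝒬 be a set of quadratic forms on V, and let C = {v ∈ V | q(v) = 0 for all q ∈ 𝒬} be their common zero cone. If a linear map A : ℂ² → V is degenerate and v ∈ V does not belong to C, then there exists a linear functional f : ℂ² → ℂ such that the linear map x ↦ A(x) + f(x) • v is not degenerate. -/
set_option linter.unusedSectionVars false

open Module Submodule

section Aux

variable {V : Type*} [AddCommGroup V] [Module ℂ V] [FiniteDimensional ℂ V]

private lemma range_cons2 (a b : V) : Set.range ![a, b] = {a, b} := by
  rw [Set.pair_comm]; simp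

private lemma exists_f_range (A : (Fin 2 → ℂ) →ₗ[ℂ] V) (v : V) {y₁ y₂ : V}
    (hy₁ : y₁ ∈ LinearMap.range A) (hy₂ : y₂ ∈ LinearMap.range A)
    (hind : LinearIndependent ℂ ![y₁, y₂]) (t₁ t₂ : ℂ) :
    ∃ f : (Fin 2 → ℂ) →ₗ[ℂ] ℂ,
      LinearMap.range (A + f.smulRight v) = span ℂ {y₁ + t₁ • v, y₂ + t₂ • v} := by
  obtain ⟨w₁, hw₁⟩ := hy₁
  obtain ⟨w₂, hw₂⟩ := hy₂
  have hcomp : ⇑A ∘ ![w₁, w₂] = ![y₁, y₂] := by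
    funext i; fin_cases i <;> simp [hw₁, hw₂]
  have hwind : LinearIndependent ℂ ![w₁, w₂] :=
    LinearIndependent.of_comp A (by rw [hcomp]; exact hind)
  have hcard : Fintype.card (Fin 2) = finrank ℂ (Fin 2 → ℂ) := by simp
  let b := basisOfLinearIndependentOfCardEqFinrank hwind hcard
  have hb : ∀ i, b i = ![w₁, w₂] i := fun i => by
    simp [b, coe_basisOfLinearIndependentOfCardEqFinrank]
  refine ⟨b.constr ℂ ![t₁, t₂], ?_⟩
  have hB : ∀ i : Fin 2,
      (A + (b.constr ℂ ![t₁, t₂]).smulRight v) (b i) = ![y₁ + t₁ • v, y₂ + t₂ • v] i := by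
    intro i
    have h1 := b.constr_basis ℂ ![t₁, t₂] i
    rw [LinearMap.add_apply, LinearMap.smulRight_apply, h1, hb i]
    fin_cases i <;> simp [hw₁, hw₂]
  apply le_antisymm
  · rw [LinearMap.range_eq_map, ← b.span_eq, Submodule.map_span, ← Set.range_comp]
    apply span_le.mpr
    rintro _ ⟨i, rfl⟩
    have : (⇑(A + (b.constr ℂ ![t₁, t₂]).smulRight v) ∘ ⇑b) i
        = ![y₁ + t₁ • v, y₂ + t₂ • v] i := hB i
    rw [this]
    fin_cases i
    · exact subset_span (Set.mem_insert _ _)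
    · exact subset_span (Set.mem_insert_of_mem _ rfl)
  · apply span_le.mpr
    rintro z hz
    rcases hz with rfl | hz
    · exact ⟨b 0, hB 0⟩
    · rcases hz with rfl
      exact ⟨b 1, hB 1⟩

private lemma key_lemma (𝒬 : Set (QuadraticForm ℂ V)) (A : (Fin 2 → ℂ) →ₗ[ℂ] V) (v : V)
    (H : ∀ f : (Fin 2 → ℂ) →ₗ[ℂ] ℂ,
      Degenerate {v : V | ∀ q ∈ 𝒬, q v = 0} (A + f.smulRight v))
    {y₁ y₂ : V} (hy₁ : y₁ ∈ LinearMap.range A) (hy₂ : y₂ ∈ LinearMap.range A) (t₁ t₂ : ℂ)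
    (hx₁C : (y₁ + t₁ • v) ∈ {v : V | ∀ q ∈ 𝒬, q v = 0})
    (hx₂C : (y₂ + t₂ • v) ∈ {v : V | ∀ q ∈ 𝒬, q v = 0})
    (hind : LinearIndependent ℂ ![y₁ + t₁ • v, y₂ + t₂ • v]) :
    v ∈ span ℂ {y₁ + t₁ • v, y₂ + t₂ • v} := by
  by_contra hvs
  have hyind : LinearIndependent ℂ ![y₁, y₂] := by
    rw [LinearIndependent.pair_iff] at hind ⊢
    intro s t hst
    have h2 : s • (y₁ + t₁ • v) + t • (y₂ + t₂ • v) = (s * t₁ + t * t₂) • v := by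
      linear_combination (norm := module) hst
    by_cases hc : s * t₁ + t * t₂ = 0
    · exact hind s t (by rw [h2, hc, zero_smul])
    · exfalso
      apply hvs
      have hveq : v = (s * t₁ + t * t₂)⁻¹ • (s • (y₁ + t₁ • v) + t • (y₂ + t₂ • v)) := by
        rw [h2, smul_smul, inv_mul_cancel₀ hc, one_smul]
      have hmem : (s * t₁ + t * t₂)⁻¹ • (s • (y₁ + t₁ • v) + t • (y₂ + t₂ • v)) ∈
          span ℂ {y₁ + t₁ • v, y₂ + t₂ • v} :=
        smul_mem _ _ (add_mem (smul_mem _ _ (subset_span (Set.mem_insert _ _)))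
          (smul_mem _ _ (subset_span (Set.mem_insert_of_mem _ rfl))))
      rwa [← hveq] at hmem
  obtain ⟨f, hf⟩ := exists_f_range A v hy₁ hy₂ hyind t₁ t₂
  obtain ⟨-, L', hL'rank, hL'set⟩ := H f
  have hx₁L : y₁ + t₁ • v ∈ L' := by
    have hm : y₁ + t₁ • v ∈ {v : V | ∀ q ∈ 𝒬, q v = 0} ∩
        (LinearMap.range (A + f.smulRight v) : Set V) :=
      ⟨hx₁C, by rw [hf]; exact subset_span (Set.mem_insert _ _)⟩
    rwa [hL'set] at hm
  have hx₂L : y₂ + t₂ • v ∈ L' := by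
    have hm : y₂ + t₂ • v ∈ {v : V | ∀ q ∈ 𝒬, q v = 0} ∩
        (LinearMap.range (A + f.smulRight v) : Set V) :=
      ⟨hx₂C, by rw [hf]; exact subset_span (Set.mem_insert_of_mem _ rfl)⟩
    rwa [hL'set] at hm
  have hle : span ℂ {y₁ + t₁ • v, y₂ + t₂ • v} ≤ L' := by
    apply span_le.mpr
    rintro z (rfl | rfl)
    · exact hx₁L
    · exact hx₂L
  have h2 : finrank ℂ (span ℂ {y₁ + t₁ • v, y₂ + t₂ • v}) = 2 := by
    have hfs := finrank_span_eq_card hind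
    rwa [range_cons2, Fintype.card_fin] at hfs
  have hmono := Submodule.finrank_mono hle
  rw [h2, hL'rank] at hmono
  omega

end Aux

/-- Proposition 1(C): if `A : ℂ² → V` is degenerate with respect to the common zero cone `C`
of a set of quadratic forms and `v ∈ V` does not belong to `C`, then `x ↦ A x + f x • v` is
non-degenerate for some linear functional `f : ℂ² → ℂ`. -/
theorem degenerate_perturb_vector {V : Type*} [AddCommGroup V] [Module ℂ V]
    [FiniteDimensional ℂ V] (𝒬 : Set (QuadraticForm ℂ V))
    (A : (Fin 2 → ℂ) →ₗ[ℂ] V) (v : V)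
    (hA : Degenerate {v : V | ∀ q ∈ 𝒬, q v = 0} A)
    (hv : v ∉ {v : V | ∀ q ∈ 𝒬, q v = 0}) :
    ∃ f : (Fin 2 → ℂ) →ₗ[ℂ] ℂ,
      ¬ Degenerate {v : V | ∀ q ∈ 𝒬, q v = 0} (A + f.smulRight v) := by
  by_contra hcon
  push_neg at hcon
  obtain ⟨hrank, L, hLrank, hLset⟩ := hA
  have hv0 : v ≠ 0 := by
    rintro rfl
    exact hv (fun q hq => map_zero q)
  by_cases hvr : v ∈ LinearMap.range A
  · -- Case 1 : v ∈ range A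
    obtain ⟨w, hw⟩ := hvr
    have hw0 : w ≠ 0 := by
      rintro rfl
      exact hv0 (by rw [← hw, map_zero])
    obtain ⟨i, hi⟩ : ∃ i, w i ≠ 0 := by
      by_contra h
      push_neg at h
      exact hw0 (funext h)
    set f : (Fin 2 → ℂ) →ₗ[ℂ] ℂ := (-(w i)⁻¹) • LinearMap.proj i with hfdef
    obtain ⟨hr2, -⟩ := hcon f
    have hBw : (A + f.smulRight v) w = 0 := by
      rw [LinearMap.add_apply, LinearMap.smulRight_apply, hw, hfdef]
      rw [LinearMap.smul_apply, LinearMap.proj_apply, smul_eq_mul,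
        neg_mul, inv_mul_cancel₀ hi, neg_smul, one_smul, add_neg_cancel]
    have h1 := LinearMap.finrank_range_add_finrank_ker (A + f.smulRight v)
    rw [hr2] at h1
    simp only [finrank_fin_fun] at h1
    have hker : LinearMap.ker (A + f.smulRight v) = ⊥ :=
      Submodule.finrank_eq_zero.mp (by omega)
    have : w ∈ LinearMap.ker (A + f.smulRight v) := hBw
    rw [hker, Submodule.mem_bot] at this
    exact hw0 this
  · -- Case 2 : v ∉ range A
    obtain ⟨u, huL, hu0⟩ : ∃ u ∈ L, u ≠ 0 :=
      Submodule.exists_mem_ne_zero_of_ne_bot (by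
        intro hbot
        rw [hbot, finrank_bot] at hLrank
        omega)
    have huCr : u ∈ {v : V | ∀ q ∈ 𝒬, q v = 0} ∩ (LinearMap.range A : Set V) := by
      rw [hLset]; exact huL
    have huC : ∀ q ∈ 𝒬, q u = 0 := huCr.1
    have huA : u ∈ LinearMap.range A := huCr.2
    have hLle : L ≤ LinearMap.range A := by
      intro z hz
      have : z ∈ {v : V | ∀ q ∈ 𝒬, q v = 0} ∩ (LinearMap.range A : Set V) := by
        rw [hLset]; exact hz
      exact this.2
    have hlt : L < LinearMap.range A := by
      apply lt_of_le_of_ne hLle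
      intro h
      rw [h, hrank] at hLrank
      omega
    obtain ⟨p, hpA, hpL⟩ := SetLike.exists_of_lt hlt
    have hpC : ¬ (∀ q ∈ 𝒬, q p = 0) := by
      intro h
      apply hpL
      have : p ∈ {v : V | ∀ q ∈ 𝒬, q v = 0} ∩ (LinearMap.range A : Set V) := ⟨h, hpA⟩
      rw [hLset] at this
      exact this
    have hLspan : L = span ℂ {u} := by
      refine (Submodule.eq_of_le_of_finrank_le ?_ ?_).symm
      · rw [span_le, Set.singleton_subset_iff]; exact huL
      · rw [hLrank, finrank_span_singleton hu0]
    have hpu : LinearIndependent ℂ ![p, u] := by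
      rw [LinearIndependent.pair_iff]
      intro s t hst
      have hs : s = 0 := by
        by_contra hs0
        apply hpL
        rw [hLspan]
        have : p = (-(s⁻¹ * t)) • u := by
          have : s • p = -(t • u) := by
            rw [eq_neg_iff_add_eq_zero]; exact hst
          calc p = s⁻¹ • (s • p) := by rw [smul_smul, inv_mul_cancel₀ hs0, one_smul]
          _ = s⁻¹ • (-(t • u)) := by rw [this]
          _ = (-(s⁻¹ * t)) • u := by rw [smul_neg, smul_smul, neg_smul]
        rw [this]
        exact smul_mem _ _ (subset_span rfl)
      refine ⟨hs, ?_⟩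
      rw [hs, zero_smul, zero_add] at hst
      exact (smul_eq_zero.mp hst).resolve_right hu0
    have step : ∀ t : ℂ, t ≠ 0 → ∀ q ∈ 𝒬, q (u + t • v) = 0 := by
      intro t ht
      obtain ⟨f, hf⟩ := exists_f_range A v hpA huA hpu 0 t
      obtain ⟨-, L', hL'rank, hL'set⟩ := hcon f
      obtain ⟨x, hxL', hx0⟩ := Submodule.exists_mem_ne_zero_of_ne_bot
        (p := L') (by
          intro hbot
          rw [hbot, finrank_bot] at hL'rank
          omega)
      have hxm : x ∈ {v : V | ∀ q ∈ 𝒬, q v = 0} ∩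
          (LinearMap.range (A + f.smulRight v) : Set V) := by
        rw [hL'set]; exact hxL'
      have hxC : ∀ q ∈ 𝒬, q x = 0 := hxm.1
      have hxr : x ∈ span ℂ {p, u + t • v} := by
        have h2 := hxm.2
        rw [hf] at h2
        rwa [zero_smul, add_zero] at h2
      obtain ⟨a, b, hab⟩ := Submodule.mem_span_pair.mp hxr
      have hb : b ≠ 0 := by
        rintro rfl
        rw [zero_smul, add_zero] at hab
        have ha : a ≠ 0 := by
          rintro rfl
          rw [zero_smul] at hab
          exact hx0 hab.symm
        apply hpC
        intro q hq
        have hqx : q x = 0 := hxC q hq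
        rw [← hab, QuadraticMap.map_smul, smul_eq_mul, mul_eq_zero] at hqx
        rcases hqx with h | h
        · exact absurd (mul_self_eq_zero.mp h) ha
        · exact h
      have hxdecomp : x = (a • p + b • u) + (b * t) • v := by
        rw [← hab]; module
      have hy₂A : a • p + b • u ∈ LinearMap.range A :=
        add_mem (smul_mem _ _ hpA) (smul_mem _ _ huA)
      have hCind : LinearIndependent ℂ ![u + (0:ℂ) • v, (a • p + b • u) + (b * t) • v] := by
        rw [LinearIndependent.pair_iff]
        intro s c hsc
        rw [zero_smul, add_zero, ← hxdecomp] at hsc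
        have hc : c = 0 := by
          by_contra hc0
          apply hvr
          have h1 : (c * b * t) • v = -((c * a) • p + (s + c * b) • u) := by
            rw [hxdecomp] at hsc
            linear_combination (norm := module) hsc
          have hne : c * b * t ≠ 0 := mul_ne_zero (mul_ne_zero hc0 hb) ht
          have hveq : v = (c * b * t)⁻¹ • ((c * b * t) • v) := by
            rw [smul_smul, inv_mul_cancel₀ hne, one_smul]
          rw [hveq, h1]
          exact smul_mem _ _ (neg_mem (add_mem (smul_mem _ _ hpA) (smul_mem _ _ huA)))
        refine ⟨?_, hc⟩
        rw [hc, zero_smul, add_zero] at hsc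
        exact (smul_eq_zero.mp hsc).resolve_right hu0
      have hx₁C : u + (0:ℂ) • v ∈ {v : V | ∀ q ∈ 𝒬, q v = 0} := by
        rw [zero_smul, add_zero]; exact huC
      have hx₂C : (a • p + b • u) + (b * t) • v ∈ {v : V | ∀ q ∈ 𝒬, q v = 0} := by
        rw [← hxdecomp]; exact hxC
      have hvmem := key_lemma 𝒬 A v hcon huA hy₂A 0 (b * t) hx₁C hx₂C hCind
      rw [zero_smul, add_zero, ← hxdecomp] at hvmem
      obtain ⟨c, d, hcd⟩ := Submodule.mem_span_pair.mp hvmem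
      have h1 : (1 - d * b * t) • v = (d * a) • p + (c + d * b) • u := by
        rw [hxdecomp] at hcd
        linear_combination (norm := module) -hcd
      have hdbt : d * b * t = 1 := by
        by_contra hne
        apply hvr
        have hne' : 1 - d * b * t ≠ 0 := sub_ne_zero.mpr (Ne.symm hne)
        have hveq : v = (1 - d * b * t)⁻¹ • ((1 - d * b * t) • v) := by
          rw [smul_smul, inv_mul_cancel₀ hne', one_smul]
        rw [hveq, h1]
        exact smul_mem _ _ (add_mem (smul_mem _ _ hpA) (smul_mem _ _ huA))
      have h0 : (d * a) • p + (c + d * b) • u = 0 := by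
        rw [← h1, hdbt, sub_self, zero_smul]
      have hpair := LinearIndependent.pair_iff.mp hpu (d * a) (c + d * b) h0
      have hd : d ≠ 0 := by
        rintro rfl
        rw [zero_mul, zero_mul] at hdbt
        exact zero_ne_one hdbt
      have ha0 : a = 0 := (mul_eq_zero.mp hpair.1).resolve_left hd
      have hxb : x = b • (u + t • v) := by
        rw [← hab, ha0]; module
      intro q hq
      have hqx : q x = 0 := hxC q hq
      rw [hxb, QuadraticMap.map_smul, smul_eq_mul, mul_eq_zero] at hqx
      rcases hqx with h | h
      · exact absurd (mul_self_eq_zero.mp h) hb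
      · exact h
    apply hv
    intro q hq
    have h1 : q (u + (1:ℂ) • v) = 0 := step 1 one_ne_zero q hq
    have h2 : q (u + (2:ℂ) • v) = 0 := step 2 two_ne_zero q hq
    have h0 : q u = 0 := huC q hq
    have hP1 : QuadraticMap.polar (⇑q) u ((1:ℂ) • v)
        = q (u + (1:ℂ) • v) - q u - q ((1:ℂ) • v) := rfl
    have hP2 : QuadraticMap.polar (⇑q) u ((2:ℂ) • v)
        = q (u + (2:ℂ) • v) - q u - q ((2:ℂ) • v) := rfl
    have hs1 : QuadraticMap.polar (⇑q) u ((1:ℂ) • v)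
        = (1:ℂ) • QuadraticMap.polar (⇑q) u v := QuadraticMap.polar_smul_right q 1 u v
    have hs2 : QuadraticMap.polar (⇑q) u ((2:ℂ) • v)
        = (2:ℂ) • QuadraticMap.polar (⇑q) u v := QuadraticMap.polar_smul_right q 2 u v
    have hq1 : q ((1:ℂ) • v) = ((1:ℂ) * 1) • q v := QuadraticMap.map_smul q 1 v
    have hq2 : q ((2:ℂ) • v) = ((2:ℂ) * 2) • q v := QuadraticMap.map_smul q 2 v
    rw [h1, h0, hq1] at hP1
    rw [h2, h0, hq2] at hP2
    rw [hP1] at hs1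
    rw [hP2] at hs2
    simp only [smul_eq_mul] at hs1 hs2
    linear_combination hs1 - (1/2 : ℂ) * hs2
end

section
/- Let V and W be finite-dimensional complex vector spaces and let ω be a nondegenerate symmetric bilinear form on W. For a linear map A : V → W let i(A) be the rank of A and let j(A) be the dimension of the radical {w ∈ range A | ω(w, w') = 0 for all w' ∈ range A} of the restriction of ω to the range of A. Then two linear maps A, B : V → W lie in the same orbit of GL(V) × O(ω) — that is, there exist a linear automorphism g of V and a linear automorphism h of W satisfying ω(h x, h y) = ω(x, y) for all x, y ∈ W, such that B = h ∘ A ∘ g — if and only if i(A) = i(B) and j(A) = j(B). -/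
open Module LinearMap

noncomputable def radicalOn {W : Type*} [AddCommGroup W] [Module ℂ W]
    (ω : W →ₗ[ℂ] W →ₗ[ℂ] ℂ) (S : Submodule ℂ W) : Submodule ℂ W :=
  S ⊓ ⨅ w' ∈ S, LinearMap.ker (ω.flip w')

lemma mem_radicalOn_iff {W : Type*} [AddCommGroup W] [Module ℂ W]
    (ω : W →ₗ[ℂ] W →ₗ[ℂ] ℂ) (S : Submodule ℂ W) (x : W) :
    x ∈ radicalOn ω S ↔ x ∈ S ∧ ∀ s ∈ S, ω x s = 0 := by
  simp [radicalOn, Submodule.mem_iInf]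

lemma exists_onb {M : Type*} [AddCommGroup M] [Module ℂ M] [FiniteDimensional ℂ M]
    (φ : LinearMap.BilinForm ℂ M) (hs : φ.IsSymm) (hn : φ.Nondegenerate) :
    ∃ b : Basis (Fin (finrank ℂ M)) ℂ M, ∀ i j, φ (b i) (b j) = if i = j then 1 else 0 := by
  obtain ⟨v, hv⟩ := LinearMap.BilinForm.exists_orthogonal_basis (LinearMap.BilinForm.isSymm_iff.mp hs)
  have hd : ∀ i, φ (v i) (v i) ≠ 0 := by
    intro i h0
    have hz : φ (v i) = 0 := by
      apply v.ext
      intro j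
      rcases eq_or_ne i j with rfl | hij
      · simpa using h0
      · simpa using hv hij
    exact v.ne_zero i (hn.1 _ (fun y => by rw [hz]; rfl))
  choose c hc using fun i => IsAlgClosed.exists_pow_nat_eq (φ (v i) (v i)) (n := 2) (by norm_num)
  have hcne : ∀ i, c i ≠ 0 := fun i h => hd i (by rw [← hc i, h]; ring)
  refine ⟨v.unitsSMul (fun i => Units.mk0 (c i)⁻¹ (inv_ne_zero (hcne i))), fun i j => ?_⟩
  rcases eq_or_ne i j with rfl | hij
  · simp only [Basis.unitsSMul_apply, Units.smul_mk0, map_smul, LinearMap.smul_apply,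
      smul_eq_mul]
    rw [← hc i]
    rw [sq]
    field_simp
    exact div_self (hcne i)
  · simp only [Basis.unitsSMul_apply, Units.smul_mk0, map_smul, LinearMap.smul_apply,
      smul_eq_mul, mul_zero, if_neg hij]
    rw [hv hij]
    ring

abbrev WittIdx (r t u : ℕ) := (Fin r ⊕ Fin t) ⊕ (Fin r ⊕ Fin u)

def wittGram (r t u : ℕ) : WittIdx r t u → WittIdx r t u → ℂ
  | .inl (.inl i), .inr (.inl j) => if i = j then 1 else 0
  | .inl (.inr i), .inl (.inr j) => if i = j then 1 else 0
  | .inr (.inl i), .inl (.inl j) => if i = j then 1 else 0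
  | .inr (.inr i), .inr (.inr j) => if i = j then 1 else 0
  | _, _ => 0

def wittSwap (r t u : ℕ) : WittIdx r t u → WittIdx r t u
  | .inl (.inl i) => .inr (.inl i)
  | .inr (.inl i) => .inl (.inl i)
  | x => x

lemma wittGram_swap (r t u : ℕ) (i i' : WittIdx r t u) :
    wittGram r t u (wittSwap r t u i) i' = if i' = i then 1 else 0 := by
  rcases i with (i | i) | (i | i) <;> rcases i' with (i' | i') | (i' | i') <;>
    simp [wittGram, wittSwap, eq_comm]

lemma exists_frame {W : Type*} [AddCommGroup W] [Module ℂ W] [FiniteDimensional ℂ W]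
    (ω : LinearMap.BilinForm ℂ W) (hsymm : ∀ x y, ω x y = ω y x)
    (hnd : ω.Nondegenerate) (S : Submodule ℂ W) (r t u : ℕ)
    (hr : finrank ℂ (radicalOn ω S) = r)
    (hst : finrank ℂ S = r + t)
    (hn : finrank ℂ W = r + t + r + u) :
    ∃ b : Basis (WittIdx r t u) ℂ W,
      (∀ i j, ω (b i) (b j) = wittGram r t u i j) ∧
      Submodule.span ℂ (Set.range (⇑b ∘ Sum.inl)) = S := by
  classical
  have hisymm : ω.IsSymm := ⟨fun x y => hsymm x y⟩
  have hrefl : ω.IsRefl := hisymm.isRefl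
  set R := radicalOn ω S with hRdef
  have hRS : R ≤ S := inf_le_left
  have hRrad : ∀ v ∈ R, ∀ s ∈ S, ω v s = 0 := by
    intro v hv s hs
    exact ((mem_radicalOn_iff ω S v).mp hv).2 s hs
  -- the x family : basis of the radical
  set xb : Basis (Fin r) ℂ R := (Module.finBasis ℂ R).reindex (finCongr hr) with hxbdef
  set x : Fin r → W := fun i => (xb i : W) with hxdef
  have hxR : ∀ i, x i ∈ R := fun i => (xb i).2
  have hxli : LinearIndependent ℂ x := by
    have := xb.linearIndependent.map' R.subtype (Submodule.ker_subtype R)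
    exact this
  -- complement T of R inside S
  obtain ⟨T', hT'⟩ := Submodule.exists_isCompl (R.comap S.subtype)
  set T : Submodule ℂ W := T'.map S.subtype with hTdef
  have hTS : T ≤ S := Submodule.map_subtype_le _ _
  have hmc : Submodule.map S.subtype (Submodule.comap S.subtype R) = R := by
    rw [Submodule.map_comap_subtype, inf_of_le_right hRS]
  have hRTinf : R ⊓ T = ⊥ := by
    rw [hTdef, ← hmc, ← Submodule.map_inf _ (Submodule.injective_subtype S),
      hT'.inf_eq_bot, Submodule.map_bot]
  have hRTsup : R ⊔ T = S := by
    rw [hTdef, ← hmc, ← Submodule.map_sup, hT'.sup_eq_top,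
      Submodule.map_top, Submodule.range_subtype]
  have hTfin : finrank ℂ T = t := by
    have h1 := Submodule.finrank_sup_add_finrank_inf_eq R T
    rw [hRTsup, hRTinf, hst, hr] at h1
    simp only [finrank_bot] at h1
    omega
  -- orthonormal basis of T
  have hωTnd : (ω.restrict T).Nondegenerate := by
    refine (LinearMap.IsRefl.nondegenerate_iff_separatingLeft (B := ω.restrict T) (fun (a b : T) hab => hrefl (a : W) b hab)).mpr ?_
    rintro ⟨v, hv⟩ h0
    have hvS : v ∈ S := hTS hv
    have hvR : v ∈ R := by
      rw [hRdef, mem_radicalOn_iff]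
      refine ⟨hvS, fun s hs => ?_⟩
      rw [← hRTsup] at hs
      obtain ⟨a, ha, b, hb, rfl⟩ := Submodule.mem_sup.mp hs
      rw [map_add]
      have h1 : ω v a = 0 := by rw [hsymm]; exact hRrad a ha v hvS
      have h2 : ω v b = 0 := h0 ⟨b, hb⟩
      rw [h1, h2, add_zero]
    have : v ∈ R ⊓ T := ⟨hvR, hv⟩
    rw [hRTinf] at this
    exact Subtype.ext this
  have hωTsymm : (ω.restrict T).IsSymm := by
    exact ⟨fun a b => hsymm a b⟩
  obtain ⟨yb0, hyb0⟩ := exists_onb (ω.restrict T) hωTsymm hωTnd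
  set yb : Basis (Fin t) ℂ T := yb0.reindex (finCongr hTfin) with hybdef
  set y : Fin t → W := fun i => (yb i : W) with hydef
  have hyT : ∀ i, y i ∈ T := fun i => (yb i).2
  have hyy : ∀ i j, ω (y i) (y j) = if i = j then 1 else 0 := by
    intro i j
    have h2 := hyb0 ((finCongr hTfin).symm i) ((finCongr hTfin).symm j)
    simp only [LinearMap.BilinForm.restrict_apply, LinearMap.domRestrict_apply] at h2
    rw [hydef]
    simp only [hybdef, Basis.reindex_apply]
    rw [h2]
    simp [Fin.ext_iff]
  have hyS : ∀ i, y i ∈ S := fun i => hTS (hyT i)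
  have hxy : ∀ i j, ω (x i) (y j) = 0 := fun i j => hRrad _ (hxR i) _ (hyS j)
  have hxx : ∀ i j, ω (x i) (x j) = 0 := fun i j => hRrad _ (hxR i) _ (hRS (hxR j))
  -- dual family z₀
  obtain ⟨Q, hQ⟩ := Submodule.exists_isCompl (Submodule.span ℂ (Set.range x))
  set π := (Submodule.span ℂ (Set.range x)).linearProjOfIsCompl Q hQ with hπdef
  set bx : Basis (Fin r) ℂ (Submodule.span ℂ (Set.range x)) := Basis.span hxli with hbxdef
  set f : Fin r → (W →ₗ[ℂ] ℂ) := fun j => (bx.coord j).comp π with hfdef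
  have hfx : ∀ i j, f j (x i) = if i = j then 1 else 0 := by
    intro i j
    have hxmem : x i ∈ Submodule.span ℂ (Set.range x) := Submodule.subset_span ⟨i, rfl⟩
    have hπ : π (x i) = bx i := by
      have h1 : π (x i) = ⟨x i, hxmem⟩ :=
        Submodule.linearProjOfIsCompl_apply_left hQ ⟨x i, hxmem⟩
      rw [h1]
      exact (Module.Basis.span_apply hxli i).symm
    rw [hfdef]
    simp only [LinearMap.comp_apply]
    rw [hπ, Basis.coord_apply, Basis.repr_self_apply]
  set z₀ : Fin r → W := fun j => (ω.toDual hnd).symm (f j) with hz₀def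
  have hz₀x : ∀ i j, ω (x i) (z₀ j) = if i = j then 1 else 0 := by
    intro i j
    rw [hsymm]
    rw [hz₀def]
    rw [LinearMap.BilinForm.apply_toDual_symm_apply]
    exact hfx i j
  set z₁ : Fin r → W := fun j => z₀ j - ∑ k, ω (z₀ j) (y k) • y k with hz₁def
  have hz₁x : ∀ i j, ω (x i) (z₁ j) = if i = j then 1 else 0 := by
    intro i j
    rw [hz₁def]
    simp only [map_sub, map_sum, map_smul, smul_eq_mul, hxy, mul_zero,
      Finset.sum_const_zero, sub_zero]
    exact hz₀x i j
  have hz₁y : ∀ m j, ω (y m) (z₁ j) = 0 := by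
    intro m j
    rw [hz₁def]
    simp only [map_sub, map_sum, map_smul, smul_eq_mul, hyy, mul_ite, mul_one, mul_zero]
    rw [Finset.sum_ite_eq Finset.univ m (fun k => ω (z₀ j) (y k))]
    simp only [Finset.mem_univ, if_true]
    rw [hsymm (y m) (z₀ j)]
    ring
  set z : Fin r → W := fun j => z₁ j - ∑ i, ((ω (z₁ j) (z₁ i)) / 2) • x i with hzdef
  have hyx : ∀ m i, ω (y m) (x i) = 0 := fun m i => by rw [hsymm]; exact hxy i m
  have hzx : ∀ i j, ω (x i) (z j) = if i = j then 1 else 0 := by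
    intro i j
    rw [hzdef]
    simp only [map_sub, map_sum, map_smul, smul_eq_mul, hxx, mul_zero,
      Finset.sum_const_zero, sub_zero]
    exact hz₁x i j
  have hzy : ∀ m j, ω (y m) (z j) = 0 := by
    intro m j
    rw [hzdef]
    simp only [map_sub, map_sum, map_smul, smul_eq_mul, hyx, mul_zero,
      Finset.sum_const_zero, sub_zero]
    exact hz₁y m j
  have hz₁xflip : ∀ j k, ω (z₁ j) (x k) = if k = j then 1 else 0 := fun j k => by
    rw [hsymm]; exact hz₁x k j
  have hzz : ∀ i j, ω (z i) (z j) = 0 := by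
    intro i j
    rw [hzdef]
    simp only [map_sub, map_sum, map_smul, LinearMap.sub_apply, LinearMap.sum_apply,
      LinearMap.smul_apply, smul_eq_mul, hz₁xflip, hz₁x, hxx, mul_ite, mul_one, mul_zero,
      Finset.sum_ite_eq', Finset.sum_ite_eq, Finset.mem_univ, if_true,
      Finset.sum_const_zero, sub_zero]
    rw [hsymm (z₁ j) (z₁ i)]
    ring
  -- the span M of x, y, z and its orthogonal complement
  set FM : ((Fin r ⊕ Fin t) ⊕ Fin r) → W := Sum.elim (Sum.elim x y) z with hFMdef
  set M := Submodule.span ℂ (Set.range FM) with hMdef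
  have hxM : ∀ i, x i ∈ M := fun i => Submodule.subset_span ⟨Sum.inl (Sum.inl i), rfl⟩
  have hyM : ∀ i, y i ∈ M := fun i => Submodule.subset_span ⟨Sum.inl (Sum.inr i), rfl⟩
  have hzM : ∀ i, z i ∈ M := fun i => Submodule.subset_span ⟨Sum.inr i, rfl⟩
  have hzxflip : ∀ i j, ω (z j) (x i) = if i = j then 1 else 0 := fun i j => by
    rw [hsymm]; exact hzx i j
  have hzyflip : ∀ j m, ω (z j) (y m) = 0 := fun j m => by rw [hsymm]; exact hzy m j
  have hpz : ∀ (a : ((Fin r ⊕ Fin t) ⊕ Fin r) → ℂ) m,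
      ω (z m) (∑ i, a i • FM i) = a (Sum.inl (Sum.inl m)) := by
    intro a m
    simp only [map_sum, map_add, map_smul, smul_eq_mul, Fintype.sum_sum_type, hFMdef, Sum.elim_inl,
      Sum.elim_inr, hzxflip, hzyflip, hzz, mul_ite, mul_one, mul_zero, Finset.sum_ite_eq',
      Finset.sum_ite_eq, Finset.mem_univ, if_true, Finset.sum_const_zero, add_zero, zero_add]
  have hpy : ∀ (a : ((Fin r ⊕ Fin t) ⊕ Fin r) → ℂ) m,
      ω (y m) (∑ i, a i • FM i) = a (Sum.inl (Sum.inr m)) := by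
    intro a m
    simp only [map_sum, map_add, map_smul, smul_eq_mul, Fintype.sum_sum_type, hFMdef, Sum.elim_inl,
      Sum.elim_inr, hyx, hyy, hzy, hz₁y, mul_ite, mul_one, mul_zero, Finset.sum_ite_eq',
      Finset.sum_ite_eq, Finset.mem_univ, if_true, Finset.sum_const_zero, add_zero, zero_add]
  have hpx : ∀ (a : ((Fin r ⊕ Fin t) ⊕ Fin r) → ℂ) m,
      ω (x m) (∑ i, a i • FM i) = a (Sum.inr m) := by
    intro a m
    simp only [map_sum, map_add, map_smul, smul_eq_mul, Fintype.sum_sum_type, hFMdef, Sum.elim_inl,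
      Sum.elim_inr, hxx, hxy, hzx, mul_ite, mul_one, mul_zero, Finset.sum_ite_eq',
      Finset.sum_ite_eq, Finset.mem_univ, if_true, Finset.sum_const_zero, add_zero, zero_add]
  have hymz : ∀ (a : ((Fin r ⊕ Fin t) ⊕ Fin r) → ℂ) m,
      ω (y m) (∑ i, a i • FM i) = a (Sum.inl (Sum.inr m)) := hpy
  have hFMli : LinearIndependent ℂ FM := by
    rw [Fintype.linearIndependent_iff]
    intro a ha i
    rcases i with (m | m) | m
    · rw [← hpz a m, ha, map_zero]
    · rw [← hpy a m, ha, map_zero]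
    · rw [← hpx a m, ha, map_zero]
  have hMfin : finrank ℂ M = r + t + r := by
    rw [hMdef, finrank_span_eq_card hFMli]
    simp
  have hMrest : (ω.restrict M).Nondegenerate := by
    refine (LinearMap.IsRefl.nondegenerate_iff_separatingLeft (B := ω.restrict M) (fun (a b : M) hab => hrefl (a : W) b hab)).mpr ?_
    rintro ⟨v, hv⟩ h0
    have hex : ∃ a : ((Fin r ⊕ Fin t) ⊕ Fin r) → ℂ, ∑ i, a i • FM i = v := by
      rw [hMdef] at hv
      exact (Submodule.mem_span_range_iff_exists_fun ℂ).mp hv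
    obtain ⟨a, hav⟩ := hex
    have h0' : ∀ m ∈ M, ω m v = 0 := by
      intro m hm
      rw [hsymm]
      exact h0 ⟨m, hm⟩
    have ha : ∀ i, a i = 0 := by
      intro i
      rcases i with (m | m) | m
      · rw [← hpz a m, hav]; exact h0' (z m) (hzM m)
      · rw [← hpy a m, hav]; exact h0' (y m) (hyM m)
      · rw [← hpx a m, hav]; exact h0' (x m) (hxM m)
    apply Subtype.ext
    show v = 0
    rw [← hav]
    simp [ha]
  set U := ω.orthogonal M with hUdef
  have hUcompl : IsCompl M U :=
    ω.isCompl_orthogonal_of_restrict_nondegenerate hrefl hMrest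
  have hUfin : finrank ℂ U = u := by
    have h1 := LinearMap.BilinForm.finrank_orthogonal hnd M
    rw [hMfin, hn] at h1
    rw [hUdef, h1]
    omega
  have hUmem : ∀ v ∈ U, ∀ m ∈ M, ω m v = 0 := by
    intro v hv m hm
    exact hv m hm
  have hUnd : (ω.restrict U).Nondegenerate := by
    refine (LinearMap.IsRefl.nondegenerate_iff_separatingLeft (B := ω.restrict U) (fun (a b : U) hab => hrefl (a : W) b hab)).mpr ?_
    rintro ⟨v, hv⟩ h0
    have hall : ∀ w', ω v w' = 0 := by
      intro w'
      have hw : w' ∈ M ⊔ U := by rw [hUcompl.sup_eq_top]; trivial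
      obtain ⟨m, hm, uu, hu, rfl⟩ := Submodule.mem_sup.mp hw
      rw [map_add]
      have h1 : ω v m = 0 := by rw [hsymm]; exact hUmem v hv m hm
      have h2 : ω v uu = 0 := h0 ⟨uu, hu⟩
      rw [h1, h2, add_zero]
    exact Subtype.ext (hnd.1 v hall)
  obtain ⟨wb0, hwb0⟩ := exists_onb (ω.restrict U) ⟨fun a b => hsymm a b⟩ hUnd
  set wb : Basis (Fin u) ℂ U := wb0.reindex (finCongr hUfin) with hwbdef
  set w : Fin u → W := fun i => (wb i : W) with hwdef
  have hwU : ∀ i, w i ∈ U := fun i => (wb i).2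
  have hww : ∀ i j, ω (w i) (w j) = if i = j then 1 else 0 := by
    intro i j
    have h2 := hwb0 ((finCongr hUfin).symm i) ((finCongr hUfin).symm j)
    simp only [LinearMap.BilinForm.restrict_apply, LinearMap.domRestrict_apply] at h2
    rw [hwdef]
    simp only [hwbdef, Basis.reindex_apply]
    rw [h2]
    simp [Fin.ext_iff]
  have hMw : ∀ m ∈ M, ∀ i, ω m (w i) = 0 := fun m hm i => hUmem (w i) (hwU i) m hm
  have hwM : ∀ i, ∀ m ∈ M, ω (w i) m = 0 := fun i m hm => by
    rw [hsymm]; exact hMw m hm i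
  have hxw : ∀ i j, ω (x i) (w j) = 0 := fun i j => hMw _ (hxM i) j
  have hyw : ∀ i j, ω (y i) (w j) = 0 := fun i j => hMw _ (hyM i) j
  have hzw : ∀ i j, ω (z i) (w j) = 0 := fun i j => hMw _ (hzM i) j
  have hwx : ∀ i j, ω (w i) (x j) = 0 := fun i j => hwM i _ (hxM j)
  have hwy : ∀ i j, ω (w i) (y j) = 0 := fun i j => hwM i _ (hyM j)
  have hwz : ∀ i j, ω (w i) (z j) = 0 := fun i j => hwM i _ (hzM j)
  -- assemble the final basis
  set F : WittIdx r t u → W := Sum.elim (Sum.elim x y) (Sum.elim z w) with hFdef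
  have hgram : ∀ i j, ω (F i) (F j) = wittGram r t u i j := by
    rintro ((i | i) | (i | i)) ((j | j) | (j | j)) <;>
      simp only [hFdef, Sum.elim_inl, Sum.elim_inr, wittGram] <;>
      first
        | exact hxx i j
        | exact hxy i j
        | exact hzx i j
        | exact hxw i j
        | exact hyx i j
        | exact hyy i j
        | exact hzy i j
        | exact hyw i j
        | exact (hzxflip j i).trans (by simp [eq_comm])
        | exact hzyflip i j
        | exact hzz i j
        | exact hzw i j
        | exact hwx i j
        | exact hwy i j
        | exact hwz i j
        | exact hww i j
  have hFli : LinearIndependent ℂ F := by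
    rw [Fintype.linearIndependent_iff]
    intro a ha i
    have h1 := congrArg (ω (F (wittSwap r t u i))) ha
    rw [map_sum, map_zero] at h1
    simp only [map_smul, smul_eq_mul, hgram, wittGram_swap, mul_ite, mul_one, mul_zero,
      Finset.sum_ite_eq', Finset.mem_univ, if_true] at h1
    exact h1
  have hcard : Fintype.card (WittIdx r t u) = finrank ℂ W := by
    simp [hn]
    omega
  have hspan : ⊤ ≤ Submodule.span ℂ (Set.range F) := by
    rw [← Submodule.eq_top_of_finrank_eq ((finrank_span_eq_card hFli).trans hcard)]
  set b := Basis.mk hFli hspan with hbdef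
  have hbF : ⇑b = F := Basis.coe_mk hFli hspan
  refine ⟨b, ?_, ?_⟩
  · intro i j
    rw [hbF]
    exact hgram i j
  · rw [hbF]
    have hcomp : F ∘ Sum.inl = Sum.elim x y := by
      funext i; rcases i with i | i <;> rfl
    rw [hcomp]
    have hle : Submodule.span ℂ (Set.range (Sum.elim x y)) ≤ S := by
      rw [Submodule.span_le]
      rintro v ⟨(i | i), rfl⟩
      · exact hRS (hxR i)
      · exact hyS i
    have hli2 : LinearIndependent ℂ (Sum.elim x y) := by
      have h3 := hFli.comp Sum.inl Sum.inl_injective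
      rwa [hcomp] at h3
    refine Submodule.eq_of_le_of_finrank_le hle ?_
    rw [finrank_span_eq_card hli2, hst]
    simp

lemma exists_precomp_auto {V W : Type*} [AddCommGroup V] [Module ℂ V] [FiniteDimensional ℂ V]
    [AddCommGroup W] [Module ℂ W]
    (A B : V →ₗ[ℂ] W) (hrange : LinearMap.range A = LinearMap.range B) :
    ∃ g : V ≃ₗ[ℂ] V, B = A ∘ₗ (g : V →ₗ[ℂ] V) := by
  classical
  obtain ⟨CA, hCA⟩ := Submodule.exists_isCompl (LinearMap.ker A)
  obtain ⟨CB, hCB⟩ := Submodule.exists_isCompl (LinearMap.ker B)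
  set eA : CA ≃ₗ[ℂ] LinearMap.range A :=
    (Submodule.quotientEquivOfIsCompl (LinearMap.ker A) CA hCA).symm.trans A.quotKerEquivRange
    with heAdef
  set eB : CB ≃ₗ[ℂ] LinearMap.range B :=
    (Submodule.quotientEquivOfIsCompl (LinearMap.ker B) CB hCB).symm.trans B.quotKerEquivRange
    with heBdef
  have heA : ∀ c : CA, (eA c : W) = A c := by
    intro c
    rw [heAdef]
    simp only [LinearEquiv.trans_apply, Submodule.quotientEquivOfIsCompl_symm_apply]
    exact A.quotKerEquivRange_apply_mk (c : V)
  have heB : ∀ c : CB, (eB c : W) = B c := by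
    intro c
    rw [heBdef]
    simp only [LinearEquiv.trans_apply, Submodule.quotientEquivOfIsCompl_symm_apply]
    exact B.quotKerEquivRange_apply_mk (c : V)
  have hkfin : finrank ℂ (LinearMap.ker B) = finrank ℂ (LinearMap.ker A) := by
    have h1 := A.finrank_range_add_finrank_ker
    have h2 := B.finrank_range_add_finrank_ker
    rw [hrange] at h1
    omega
  set k : (LinearMap.ker B) ≃ₗ[ℂ] (LinearMap.ker A) := LinearEquiv.ofFinrankEq _ _ hkfin
    with hkdef
  set eC : CB ≃ₗ[ℂ] CA :=
    (eB.trans (LinearEquiv.ofEq _ _ hrange.symm)).trans eA.symm with heCdef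
  have heC : ∀ c : CB, A (eC c : V) = B c := by
    intro c
    rw [heCdef]
    simp only [LinearEquiv.trans_apply]
    rw [← heA (eA.symm _)]
    rw [LinearEquiv.apply_symm_apply]
    rw [LinearEquiv.coe_ofEq_apply]
    exact heB c
  set g : V ≃ₗ[ℂ] V :=
    ((Submodule.prodEquivOfIsCompl _ _ hCB).symm.trans (k.prodCongr eC)).trans
      (Submodule.prodEquivOfIsCompl _ _ hCA) with hgdef
  refine ⟨g, ?_⟩
  have hker : ∀ v ∈ LinearMap.ker B, B v = A (g v) := by
    intro v hv
    rw [hgdef]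
    simp only [LinearEquiv.trans_apply]
    have h1 : ((LinearMap.ker B).prodEquivOfIsCompl CB hCB).symm v
        = ((⟨v, hv⟩ : LinearMap.ker B), 0) :=
      Submodule.prodEquivOfIsCompl_symm_apply_left (h := hCB) (x := ⟨v, hv⟩)
    rw [h1]
    simp only [LinearEquiv.prodCongr_apply, map_zero]
    rw [Submodule.coe_prodEquivOfIsCompl']
    simp only [Submodule.coe_zero, add_zero]
    have : A ((k (⟨v, hv⟩ : LinearMap.ker B) : LinearMap.ker A) : V) = 0 := (k (⟨v, hv⟩ : LinearMap.ker B)).2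
    rw [this]
    exact hv
  have hC : ∀ v ∈ CB, B v = A (g v) := by
    intro v hv
    rw [hgdef]
    simp only [LinearEquiv.trans_apply]
    have h1 : ((LinearMap.ker B).prodEquivOfIsCompl CB hCB).symm v
        = (0, (⟨v, hv⟩ : CB)) :=
      Submodule.prodEquivOfIsCompl_symm_apply_right (h := hCB) (x := ⟨v, hv⟩)
    rw [h1]
    simp only [LinearEquiv.prodCongr_apply, map_zero]
    rw [Submodule.coe_prodEquivOfIsCompl']
    simp only [Submodule.coe_zero, zero_add]
    exact (heC ⟨v, hv⟩).symm
  ext v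
  have hv : v ∈ LinearMap.ker B ⊔ CB := by rw [hCB.sup_eq_top]; trivial
  obtain ⟨a, ha, b, hb, rfl⟩ := Submodule.mem_sup.mp hv
  simp only [LinearMap.comp_apply, map_add]
  rw [hker a ha, hC b hb]
  simp [map_add]

lemma radicalOn_map {W : Type*} [AddCommGroup W] [Module ℂ W]
    (ω : W →ₗ[ℂ] W →ₗ[ℂ] ℂ) (h : W ≃ₗ[ℂ] W)
    (hiso : ∀ x y, ω (h x) (h y) = ω x y) (S : Submodule ℂ W) :
    Submodule.map (h : W →ₗ[ℂ] W) (radicalOn ω S) =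
      radicalOn ω (Submodule.map (h : W →ₗ[ℂ] W) S) := by
  ext v
  rw [Submodule.mem_map_equiv, mem_radicalOn_iff, mem_radicalOn_iff,
    ← Submodule.mem_map_equiv (e := h) (x := v)]
  constructor
  · rintro ⟨h1, h2⟩
    refine ⟨h1, fun s' hs' => ?_⟩
    rw [Submodule.mem_map] at hs'
    obtain ⟨s, hs, rfl⟩ := hs'
    have := h2 s hs
    rw [← hiso (h.symm v) s] at this
    rwa [h.apply_symm_apply] at this
  · rintro ⟨h1, h2⟩
    refine ⟨h1, fun s hs => ?_⟩
    have hmem : h s ∈ Submodule.map (h : W →ₗ[ℂ] W) S := Submodule.mem_map_of_mem hs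
    have := h2 (h s) hmem
    rw [← h.apply_symm_apply v, hiso] at this
    exact this

/-- **Witt's theorem** (orbit classification): two linear maps `A, B : V → W` lie in the same
orbit of `GL(V) × O(ω)` if and only if they have the same rank and the radicals of the
restrictions of `ω` to their ranges have the same dimension. -/
theorem witt_orbit_iff {V W : Type*}
    [AddCommGroup V] [Module ℂ V] [FiniteDimensional ℂ V]
    [AddCommGroup W] [Module ℂ W] [FiniteDimensional ℂ W]
    (ω : W →ₗ[ℂ] W →ₗ[ℂ] ℂ)
    (hsymm : ∀ x y : W, ω x y = ω y x)
    (hnd : ∀ x : W, (∀ y : W, ω x y = 0) → x = 0)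
    (A B : V →ₗ[ℂ] W) :
    (∃ (g : V ≃ₗ[ℂ] V) (h : W ≃ₗ[ℂ] W),
        (∀ x y : W, ω (h x) (h y) = ω x y) ∧
        B = (h : W →ₗ[ℂ] W) ∘ₗ A ∘ₗ (g : V →ₗ[ℂ] V)) ↔
      (Module.finrank ℂ (LinearMap.range A) = Module.finrank ℂ (LinearMap.range B) ∧
       Module.finrank ℂ (radicalOn ω (LinearMap.range A)) =
         Module.finrank ℂ (radicalOn ω (LinearMap.range B))) := by
  have hnd' : LinearMap.BilinForm.Nondegenerate ω :=
    ⟨fun x hx => hnd x hx, fun y hy => hnd y (fun x => by rw [hsymm]; exact hy x)⟩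
  have hrefl : LinearMap.IsRefl ω := fun x y hxy => by rw [hsymm]; exact hxy
  constructor
  · rintro ⟨g, h, hiso, rfl⟩
    have hrange : LinearMap.range ((h : W →ₗ[ℂ] W) ∘ₗ A ∘ₗ (g : V →ₗ[ℂ] V))
        = Submodule.map (h : W →ₗ[ℂ] W) (LinearMap.range A) := by
      rw [LinearMap.range_comp, LinearMap.range_comp, LinearEquiv.range, Submodule.map_top]
    constructor
    · rw [hrange, LinearEquiv.finrank_map_eq]
    · rw [hrange, ← radicalOn_map ω h hiso, LinearEquiv.finrank_map_eq]
  · rintro ⟨hs, hr⟩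
    set n := finrank ℂ W with hndef
    set sA := finrank ℂ (LinearMap.range A) with hsAdef
    set rA := finrank ℂ (radicalOn ω (LinearMap.range A)) with hrAdef
    have hrad_le : ∀ C : V →ₗ[ℂ] W,
        finrank ℂ (radicalOn ω (LinearMap.range C)) ≤ finrank ℂ (LinearMap.range C) :=
      fun C => Submodule.finrank_mono inf_le_left
    have hrad_orth : ∀ C : V →ₗ[ℂ] W, finrank ℂ (radicalOn ω (LinearMap.range C))
        + finrank ℂ (LinearMap.range C) ≤ n := by
      intro C
      have hle : radicalOn ω (LinearMap.range C) ≤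
          LinearMap.BilinForm.orthogonal ω (LinearMap.range C) := by
        intro v hv
        rw [LinearMap.BilinForm.mem_orthogonal_iff]
        intro s hs
        rw [hsymm]
        exact ((mem_radicalOn_iff ω _ v).mp hv).2 s hs
      have h1 := Submodule.finrank_mono hle
      rw [LinearMap.BilinForm.finrank_orthogonal hnd'] at h1
      have h2 : finrank ℂ (LinearMap.range C) ≤ n := Submodule.finrank_le _
      omega
    have hA1 := hrad_le A
    have hA2 := hrad_orth A
    set t := sA - rA with htdef
    set u := n - sA - rA with hudef
    obtain ⟨bA, hgA, hspA⟩ := exists_frame ω hsymm hnd' (LinearMap.range A) rA t u rfl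
      (by omega) (by omega)
    obtain ⟨bB, hgB, hspB⟩ := exists_frame ω hsymm hnd' (LinearMap.range B) rA t u
      hr.symm (by omega) (by omega)
    set h : W ≃ₗ[ℂ] W := bA.equiv bB (Equiv.refl _) with hhdef
    have hiso : ∀ x y, ω (h x) (h y) = ω x y := by
      have key : (ω.compl₁₂ (h : W →ₗ[ℂ] W) (h : W →ₗ[ℂ] W)) = ω := by
        apply LinearMap.ext_basis bA bA
        intro i j
        rw [LinearMap.compl₁₂_apply]
        simp only [LinearEquiv.coe_coe, hhdef, Basis.equiv_apply, Equiv.refl_apply]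
        rw [hgA, hgB]
      intro x y
      have := LinearMap.congr_fun (LinearMap.congr_fun key x) y
      simpa [LinearMap.compl₁₂_apply] using this
    have hmap : Submodule.map (h : W →ₗ[ℂ] W) (LinearMap.range A) = LinearMap.range B := by
      have hfun : (⇑((h : W →ₗ[ℂ] W)) ∘ (⇑bA ∘ Sum.inl))
          = ⇑bB ∘ (Sum.inl : (Fin rA ⊕ Fin t) → WittIdx rA t u) := by
        funext i
        simp [hhdef, Basis.equiv_apply]
      rw [← hspA, ← hspB, Submodule.map_span, ← Set.range_comp, hfun]
    have hrange2 : LinearMap.range ((h : W →ₗ[ℂ] W) ∘ₗ A) = LinearMap.range B := by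
      rw [LinearMap.range_comp, hmap]
    obtain ⟨g, hg⟩ := exists_precomp_auto ((h : W →ₗ[ℂ] W) ∘ₗ A) B hrange2
    exact ⟨g, h, hiso, by rw [hg, LinearMap.comp_assoc]⟩
end
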